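/- arXiv:1205.3816 — 6 statements merged into one kernel-verified Lean document; each statement's English description precedes it below -/
import Mathlib

section
/- Let G be a finite simple graph and M a near-perfect matching of G whose unique exposed vertex is v. Then G is factor-critical if and only if for every vertex u of G there exists an M-balanced path from u to v. -/
open SimpleGraph

variable {V : Type*}

/-- A set of edges is pairwise vertex-disjoint. -/
def DisjointEdges (N : Set (Sym2 V)) : Prop :=
  ∀ e ∈ N, ∀ f ∈ N, e ≠ f → ∀ x : V, x ∈ e → x ∉ f

/-- `M` is a matching of `G`: a set of pairwise vertex-disjoint edges of `G`. -/
def IsMatchingSet (G : SimpleGraph V) (M : Set (Sym2 V)) : Prop :=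
  M ⊆ G.edgeSet ∧ DisjointEdges M

/-- `M` is a perfect matching of `G`: a matching covering every vertex. -/
def IsPerfectMatchingSet (G : SimpleGraph V) (M : Set (Sym2 V)) : Prop :=
  IsMatchingSet G M ∧ ∀ v : V, ∃ e ∈ M, v ∈ e

/-- `M` is a near-perfect matching of `G` whose unique exposed vertex is `v`. -/
def IsNearPerfectMatchingSet (G : SimpleGraph V) (M : Set (Sym2 V)) (v : V) : Prop :=
  IsMatchingSet G M ∧ (∀ e ∈ M, v ∉ e) ∧ ∀ u : V, u ≠ v → ∃ e ∈ M, u ∈ e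

/-- The induced subgraph `G[X]` has a perfect matching. -/
def HasPMOn (G : SimpleGraph V) (X : Set V) : Prop :=
  ∃ M : Set (Sym2 V), IsMatchingSet G M ∧ (∀ e ∈ M, ∀ x : V, x ∈ e → x ∈ X) ∧
    ∀ v ∈ X, ∃ e ∈ M, v ∈ e

/-- `G` is factorizable: it has a perfect matching. -/
def Factorizable (G : SimpleGraph V) : Prop :=
  ∃ M : Set (Sym2 V), IsPerfectMatchingSet G M

/-- `G` is factor-critical: deleting any single vertex leaves a factorizable graph. -/
def FactorCritical (G : SimpleGraph V) : Prop :=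
  ∀ v : V, HasPMOn G {v}ᶜ

/-- A walk is `M`-alternating: its edges outside `M` are pairwise vertex-disjoint. -/
def MAlternating (M : Set (Sym2 V)) {G : SimpleGraph V} {u v : V} (p : G.Walk u v) : Prop :=
  ∀ e ∈ p.edges, ∀ f ∈ p.edges, e ∉ M → f ∉ M → e ≠ f → ∀ x : V, x ∈ e → x ∉ f

/-- An `M`-saturated path: a path with an odd number of edges such that `M ∩ E(P)`
is a perfect matching of `P`. -/
def IsSaturatedPath (M : Set (Sym2 V)) {G : SimpleGraph V} {u v : V} (p : G.Walk u v) : Prop :=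
  p.IsPath ∧ Odd p.length ∧ ∀ x ∈ p.support, ∃ e ∈ p.edges, e ∈ M ∧ x ∈ e

/-- An `M`-exposed path: a path with an odd number of edges such that `E(P) \ M`
is a perfect matching of `P`. -/
def IsExposedPath (M : Set (Sym2 V)) {G : SimpleGraph V} {u v : V} (p : G.Walk u v) : Prop :=
  p.IsPath ∧ Odd p.length ∧ ∀ x ∈ p.support, ∃ e ∈ p.edges, e ∉ M ∧ x ∈ e

/-- An `M`-balanced path from `u` to `v`: an `M`-alternating path with an even number
of edges whose first edge (the one incident with `u`) belongs to `M`; a trivial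
one-vertex path is `M`-balanced. -/
def IsBalancedPath (M : Set (Sym2 V)) {G : SimpleGraph V} {u v : V} (p : G.Walk u v) : Prop :=
  p.IsPath ∧ Even p.length ∧ MAlternating M p ∧ ∀ e ∈ p.edges.head?, e ∈ M

/-- An edge of `G` is allowed if it lies in some perfect matching of `G`. -/
def Allowed (G : SimpleGraph V) (e : Sym2 V) : Prop :=
  ∃ M : Set (Sym2 V), IsPerfectMatchingSet G M ∧ e ∈ M

/-- The spanning subgraph of `G` formed by its allowed edges. -/
def allowedSubgraph (G : SimpleGraph V) : SimpleGraph V where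
  Adj u v := G.Adj u v ∧ Allowed G s(u, v)
  symm := by
    constructor
    intro u v h
    refine ⟨h.1.symm, ?_⟩
    rw [Sym2.eq_swap]
    exact h.2
  loopless := ⟨fun v h => G.loopless.irrefl v h.1⟩

/-- `C` is (the vertex set of) a factor-component of `G`: a connected component of the
spanning subgraph of `G` formed by the allowed edges (the factor-component itself being
the induced subgraph `G[C]`). -/
def IsFactorComponent (G : SimpleGraph V) (C : Set V) : Prop :=
  ∃ c : (allowedSubgraph G).ConnectedComponent, C = c.supp

/-- `G` is elementary: it is factorizable and has exactly one factor-component. -/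
def Elementary (G : SimpleGraph V) : Prop :=
  Factorizable G ∧ (allowedSubgraph G).Connected

/-- `X` is a separating set of `G`. -/
def Separating (G : SimpleGraph V) (X : Set V) : Prop :=
  ∀ C : Set V, IsFactorComponent G C → C ⊆ X ∨ Disjoint C X

/-- The contraction `G[X]/S`: the induced subgraph of `G` on `X` with `S` contracted
to a single vertex (the vertex `none`), deleting loops and parallel edges. -/
def contractOn (G : SimpleGraph V) (X S : Set V) : SimpleGraph (Option ↥(X \ S)) where
  Adj a b :=
    match a, b with
    | some x, some y => G.Adj x.1 y.1
    | some x, none => ∃ s ∈ S, G.Adj x.1 s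
    | none, some y => ∃ s ∈ S, G.Adj y.1 s
    | none, none => False
  symm := by
    constructor
    rintro (_ | x) (_ | y) h
    · exact h.elim
    · exact h
    · exact h
    · exact h.symm
  loopless := by
    constructor
    rintro (_ | x) h
    · exact h.elim
    · exact G.loopless.irrefl x.1 h

/-- `X` is a critical-inducing set for the factor-component (with vertex set) `C1`:
a separating set containing `C1` such that `G[X]/C1` is factor-critical. -/
def CriticalInducing (G : SimpleGraph V) (C1 X : Set V) : Prop :=
  Separating G X ∧ C1 ⊆ X ∧ FactorCritical (contractOn G X C1)

/-- `C1 ⊵ C2`: there is a critical-inducing set for `C1` to `C2`. -/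
def Yield (G : SimpleGraph V) (C1 C2 : Set V) : Prop :=
  ∃ X : Set V, CriticalInducing G C1 X ∧ C2 ⊆ X

/-- `u ∼ v`: `u = v` or `G - u - v` has no perfect matching. -/
def SimRel (G : SimpleGraph V) (u v : V) : Prop :=
  u = v ∨ ¬ HasPMOn G (({u, v} : Set V)ᶜ)

/-- An `M`-ear relative to the vertex set `X`: a path whose two end vertices lie in `X`
and whose internal vertices do not (or a cycle with exactly one vertex in `X`), such
that the ear minus `X` is an `M`-saturated path. -/
def IsMEar (G : SimpleGraph V) (M : Set (Sym2 V)) (X : Set V) {u v : V}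
    (p : G.Walk u v) : Prop :=
  u ∈ X ∧ v ∈ X ∧ ((∃ h : u = v, (p.copy rfl h.symm).IsCycle) ∨ (u ≠ v ∧ p.IsPath)) ∧
  ∃ (x y : V) (hux : G.Adj u x) (q : G.Walk x y) (hyv : G.Adj y v),
    p = SimpleGraph.Walk.cons hux (q.concat hyv) ∧
    IsSaturatedPath M q ∧ ∀ w ∈ q.support, w ∉ X

/-- An `M`-ear relative to `X` through (the factor-component with vertex set) `C`:
some internal vertex of the ear lies in `C`. -/
def IsMEarThrough (G : SimpleGraph V) (M : Set (Sym2 V)) (X C : Set V) {u v : V}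
    (p : G.Walk u v) : Prop :=
  IsMEar G M X p ∧ ∃ w ∈ p.support, w ∉ X ∧ w ∈ C

/-- An `M`-ear sequence `(H 0, …, H k)` of pairwise distinct factor-components,
where for each `i` there is an `M`-ear relative to `H i` through `H (i+1)`. -/
def IsMEarSequence (G : SimpleGraph V) (M : Set (Sym2 V)) (k : ℕ)
    (H : Fin (k + 1) → Set V) : Prop :=
  (∀ i, IsFactorComponent G (H i)) ∧ Function.Injective H ∧
  ∀ i : Fin k, ∃ (u v : V) (p : G.Walk u v),
    IsMEarThrough G M (H i.castSucc) (H i.succ) p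

section AuxStatement0

variable {G : SimpleGraph V} {M : Set (Sym2 V)}

/-- In a path, any edge containing the start vertex is the first edge. -/
lemma aux_edge_start_eq_head {u v : V} {p : G.Walk u v} (hp : p.IsPath) {e : Sym2 V}
    (he : e ∈ p.edges) (hu : u ∈ e) : p.edges.head? = some e := by
  cases p with
  | nil => simp at he
  | cons h q =>
    rw [SimpleGraph.Walk.edges_cons] at he ⊢
    rcases List.mem_cons.mp he with rfl | he'
    · rfl
    · exfalso
      obtain ⟨y, rfl⟩ := Sym2.mem_iff_exists.mp hu
      exact ((SimpleGraph.Walk.cons_isPath_iff _ _).mp hp).2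
        (q.fst_mem_support_of_mem_edges he')

lemma aux_start_edge_mem {u v : V} {p : G.Walk u v} (hp : IsBalancedPath M p) {e : Sym2 V}
    (he : e ∈ p.edges) (hu : u ∈ e) : e ∈ M :=
  hp.2.2.2 e (aux_edge_start_eq_head hp.1 he hu)

lemma aux_mem_support_of_mem_edges {u v x : V} {p : G.Walk u v} {e : Sym2 V}
    (he : e ∈ p.edges) (hx : x ∈ e) : x ∈ p.support := by
  obtain ⟨y, rfl⟩ := Sym2.mem_iff_exists.mp hx
  exact p.fst_mem_support_of_mem_edges he

/-- A nontrivial balanced path decomposes as an `M`-edge followed by a non-`M`-edge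
followed by a balanced path. -/
lemma aux_two_step {w v : V} (hMd : DisjointEdges M) (p : G.Walk w v)
    (hp : IsBalancedPath M p) (hwv : w ≠ v) :
    ∃ (u1 u2 : V) (h1 : G.Adj w u1) (h2 : G.Adj u1 u2) (r : G.Walk u2 v),
      p = SimpleGraph.Walk.cons h1 (SimpleGraph.Walk.cons h2 r) ∧
      s(w, u1) ∈ M ∧ s(u1, u2) ∉ M ∧ IsBalancedPath M r := by
  obtain ⟨hpath, heven, halt, hhead⟩ := hp
  cases p with
  | nil => exact absurd rfl hwv
  | @cons _ u1 _ h1 q =>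
    cases q with
    | nil =>
      exfalso
      rw [SimpleGraph.Walk.length_cons, SimpleGraph.Walk.length_nil] at heven
      simp [Nat.even_add_one] at heven
    | @cons _ u2 _ h2 r =>
      have he1M : s(w, u1) ∈ M := hhead _ rfl
      have hwp : w ∉ (SimpleGraph.Walk.cons h2 r).support :=
        ((SimpleGraph.Walk.cons_isPath_iff _ _).mp hpath).2
      have hpath2 : (SimpleGraph.Walk.cons h2 r).IsPath :=
        ((SimpleGraph.Walk.cons_isPath_iff _ _).mp hpath).1
      have hu1r : u1 ∉ r.support :=
        ((SimpleGraph.Walk.cons_isPath_iff _ _).mp hpath2).2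
      have he2M : s(u1, u2) ∉ M := by
        intro he2
        have hne : s(w, u1) ≠ s(u1, u2) := by
          intro hq
          rcases Sym2.eq_iff.mp hq with ⟨rfl, rfl⟩ | ⟨rfl, -⟩
          · exact h1.ne rfl
          · exact hwp (by simp [SimpleGraph.Walk.support_cons])
        exact hMd _ he1M _ he2 hne u1 (by simp) (by simp)
      refine ⟨u1, u2, h1, h2, r, rfl, he1M, he2M, hpath2.of_cons, ?_, ?_, ?_⟩
      · obtain ⟨k, hk⟩ := heven
        simp only [SimpleGraph.Walk.length_cons] at hk
        exact ⟨k - 1, by omega⟩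
      · intro e he f hf heM hfM hnef x hxe
        exact halt e (by simp [he]) f (by simp [hf]) heM hfM hnef x hxe
      · intro e he
        cases r with
        | nil => simp at he
        | @cons _ u3 _ h3 t =>
          rw [SimpleGraph.Walk.edges_cons, List.head?_cons, Option.mem_def,
            Option.some.injEq] at he
          subst he
          by_contra he3M
          have hne : s(u1, u2) ≠ s(u2, u3) := by
            intro hq
            rcases Sym2.eq_iff.mp hq with ⟨rfl, rfl⟩ | ⟨rfl, -⟩
            · exact h2.ne rfl
            · exact hu1r (by simp [SimpleGraph.Walk.support_cons])
          exact halt _ (by simp) _ (by simp) he2M he3M hne u2 (by simp) (by simp)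

/-- Along a balanced path from `w`, every vertex other than `w` lies on a non-matching
edge of the path, and every vertex other than `w` and the endpoint lies on a matching
edge of the path. -/
lemma aux_balanced_cover (hMd : DisjointEdges M) :
    ∀ (n : ℕ) {w v : V} (p : G.Walk w v), p.length ≤ n → IsBalancedPath M p →
      ∀ x ∈ p.support, x ≠ w →
        (∃ e ∈ p.edges, e ∉ M ∧ x ∈ e) ∧ (x ≠ v → ∃ e ∈ p.edges, e ∈ M ∧ x ∈ e) := by
  intro n
  induction n with
  | zero =>
    intro w v p hlen hp x hx hxw
    exfalso
    have : p = (SimpleGraph.Walk.nil.copy rfl (by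
      cases p with
      | nil => rfl
      | cons h q => simp at hlen)) := by
      cases p with
      | nil => rfl
      | cons h q => simp at hlen
    rw [this] at hx
    simp at hx
    exact hxw hx
  | succ n ih =>
    intro w v p hlen hp x hx hxw
    by_cases hwv : w = v
    · exfalso
      subst hwv
      have : p = SimpleGraph.Walk.nil := (SimpleGraph.Walk.isPath_iff_eq_nil (p := p)).mp hp.1
      rw [this] at hx
      simp at hx
      exact hxw hx
    · obtain ⟨u1, u2, h1, h2, r, rfl, he1M, he2M, hr⟩ := aux_two_step hMd p hp hwv
      simp only [SimpleGraph.Walk.support_cons, List.mem_cons] at hx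
      have hlenr : r.length ≤ n := by
        simp only [SimpleGraph.Walk.length_cons] at hlen; omega
      rcases hx with rfl | rfl | hx
      · exact absurd rfl hxw
      · constructor
        · exact ⟨s(x, u2), by simp, he2M, by simp⟩
        · intro _; exact ⟨s(w, x), by simp, he1M, by simp⟩
      · by_cases hxu2 : x = u2
        · subst hxu2
          refine ⟨⟨s(u1, x), by simp, he2M, by simp⟩, ?_⟩
          intro hxv
          obtain ⟨u3, u4, h3, h4, t, heq, he3M, -, -⟩ := aux_two_step hMd r hr hxv
          exact ⟨s(x, u3), by rw [heq]; simp, he3M, by simp⟩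
        · obtain ⟨hB, hC⟩ := ih r hlenr hr x hx hxu2
          constructor
          · obtain ⟨e, he, heM, hxe⟩ := hB
            exact ⟨e, by simp [he], heM, hxe⟩
          · intro hxv
            obtain ⟨e, he, heM, hxe⟩ := hC hxv
            exact ⟨e, by simp [he], heM, hxe⟩

/-- Switching a near-perfect matching along a balanced path from `w` gives a perfect
matching of `G - w`. -/
lemma aux_toHasPMOn {v : V} (hM : IsNearPerfectMatchingSet G M v)
    {w : V} (p : G.Walk w v) (hp : IsBalancedPath M p) : HasPMOn G {w}ᶜ := by
  obtain ⟨⟨hMG, hMd⟩, hvM, hcov⟩ := hM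
  have halt := hp.2.2.1
  -- every edge of `M` containing `w` is an edge of `p`
  have hwM : ∀ e ∈ M, w ∈ e → e ∈ p.edges := by
    intro e heM hwe
    by_cases hwv : w = v
    · exact absurd (hwv ▸ hwe) (hvM e heM)
    · obtain ⟨u1, u2, h1, h2, r, heq, he1M, -, -⟩ := aux_two_step hMd p hp hwv
      by_cases hee : e = s(w, u1)
      · rw [hee, heq]; simp
      · exact absurd hwe (hMd _ he1M _ heM (Ne.symm hee) w (by simp))
  have hBC := aux_balanced_cover hMd p.length p le_rfl hp
  refine ⟨(M \ {e | e ∈ p.edges}) ∪ ({e | e ∈ p.edges} \ M), ⟨?_, ?_⟩, ?_, ?_⟩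
  · rintro e (⟨heM, -⟩ | ⟨hep, -⟩)
    · exact hMG heM
    · exact p.edges_subset_edgeSet hep
  · rintro e (⟨heM, hep⟩ | ⟨hep, heM⟩) f (⟨hfM, hfp⟩ | ⟨hfp, hfM⟩) hnef x hxe hxf
    · exact hMd e heM f hfM hnef x hxe hxf
    · -- e ∈ M \ p, f ∈ p \ M
      have hxs : x ∈ p.support := aux_mem_support_of_mem_edges hfp hxf
      by_cases hxw : x = w
      · exact hfM (aux_start_edge_mem hp hfp (hxw ▸ hxf))
      · by_cases hxv : x = v
        · exact hvM e heM (hxv ▸ hxe)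
        · obtain ⟨g, hgp, hgM, hxg⟩ := (hBC x hxs hxw).2 hxv
          by_cases heg : e = g
          · exact hep (heg ▸ hgp)
          · exact hMd e heM g hgM heg x hxe hxg
    · -- e ∈ p \ M, f ∈ M \ p
      have hxs : x ∈ p.support := aux_mem_support_of_mem_edges hep hxe
      by_cases hxw : x = w
      · exact heM (aux_start_edge_mem hp hep (hxw ▸ hxe))
      · by_cases hxv : x = v
        · exact hvM f hfM (hxv ▸ hxf)
        · obtain ⟨g, hgp, hgM, hxg⟩ := (hBC x hxs hxw).2 hxv
          by_cases hfg : f = g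
          · exact hfp (hfg ▸ hgp)
          · exact hMd f hfM g hgM hfg x hxf hxg
    · exact halt e hep f hfp heM hfM hnef x hxe hxf
  · rintro e (⟨heM, hep⟩ | ⟨hep, heM⟩) x hxe
    · intro hxw
      simp only [Set.mem_singleton_iff] at hxw
      exact hep (hwM e heM (hxw ▸ hxe))
    · intro hxw
      simp only [Set.mem_singleton_iff] at hxw
      exact heM (aux_start_edge_mem hp hep (hxw ▸ hxe))
  · intro y hy
    have hyw : y ≠ w := fun h => hy (by simp [h])
    by_cases hys : y ∈ p.support
    · obtain ⟨e, hep, heM, hye⟩ := (hBC y hys hyw).1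
      exact ⟨e, Or.inr ⟨hep, heM⟩, hye⟩
    · have hyv : y ≠ v := fun h => hys (h ▸ p.end_mem_support)
      obtain ⟨e, heM, hye⟩ := hcov y hyv
      have hep : e ∉ p.edges := fun h => hys (aux_mem_support_of_mem_edges h hye)
      exact ⟨e, Or.inl ⟨heM, hep⟩, hye⟩

/-- Greedy construction of a balanced path from `u` to `v`, alternating between the
near-perfect matching `M` and a perfect matching `N` of `G - u₀`. -/
lemma aux_build_path [DecidableEq V] {v : V} (hM : IsNearPerfectMatchingSet G M v)
    {N : Set (Sym2 V)} (hNG : N ⊆ G.edgeSet) (hNd : DisjointEdges N) :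
    ∀ (n : ℕ) (S : Finset V) (u : V), S.card ≤ n → u ∈ S → v ∈ S →
      (∀ e ∈ M, ∀ x ∈ e, x ∈ S → ∀ y ∈ e, y ∈ S) →
      (∀ e ∈ N, (∀ x ∈ e, x ∈ S) → u ∉ e) →
      (∀ e ∈ N, ∀ x ∈ e, x ∈ S → x ≠ u → ∀ y ∈ e, y ∈ S) →
      (∀ w ∈ S, w ≠ u → ∃ e ∈ N, w ∈ e) →
      ∃ p : G.Walk u v, IsBalancedPath M p ∧ ∀ x ∈ p.support, x ∈ S := by
  obtain ⟨⟨hMG, hMd⟩, hvM, hMcov⟩ := hM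
  intro n
  induction n with
  | zero =>
    intro S u hcard huS _ _ _ _ _
    exact absurd (Finset.card_eq_zero.mp (Nat.le_zero.mp hcard))
      (Finset.ne_empty_of_mem huS)
  | succ n ih =>
    intro S u hcard huS hvS hMin hNavoid hNin hNcov
    by_cases huv : u = v
    · subst huv
      exact ⟨SimpleGraph.Walk.nil, ⟨SimpleGraph.Walk.IsPath.nil, by simp,
        by intro e he; simp at he, by intro e he; simp at he⟩,
        by intro x hx; simp at hx; exact hx ▸ huS⟩
    · -- take the M-edge at u
      obtain ⟨e1, he1M, hue1⟩ := hMcov u huv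
      obtain ⟨u1, rfl⟩ := Sym2.mem_iff_exists.mp hue1
      have h1 : G.Adj u u1 := hMG he1M
      have hu1S : u1 ∈ S := hMin _ he1M u (by simp) huS u1 (by simp)
      have hu1v : u1 ≠ v := fun h => hvM _ he1M (by simp [h])
      -- take the N-edge at u1
      obtain ⟨g, hgN, hu1g⟩ := hNcov u1 hu1S h1.ne'
      obtain ⟨u2, rfl⟩ := Sym2.mem_iff_exists.mp hu1g
      have h2 : G.Adj u1 u2 := hNG hgN
      have hu2S : u2 ∈ S := hNin _ hgN u1 (by simp) hu1S h1.ne' u2 (by simp)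
      have hgS : ∀ x ∈ s(u1, u2), x ∈ S := by
        intro x hx
        rcases Sym2.mem_iff.mp hx with rfl | rfl
        · exact hu1S
        · exact hu2S
      have hug : u ∉ s(u1, u2) := hNavoid _ hgN hgS
      have hu2u : u2 ≠ u := fun h => hug (by simp [h])
      have hgM : s(u1, u2) ∉ M := by
        intro hgM'
        by_cases heg : s(u, u1) = s(u1, u2)
        · exact hug (heg ▸ (by simp : u ∈ s(u, u1)))
        · exact hMd _ he1M _ hgM' heg u1 (by simp) (by simp)
      set S' : Finset V := (S.erase u).erase u1 with hS'
      have hmemS' : ∀ x, x ∈ S' ↔ (x ∈ S ∧ x ≠ u ∧ x ≠ u1) := by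
        intro x
        simp only [hS', Finset.mem_erase]
        tauto
      have hcard' : S'.card ≤ n := by
        show ((S.erase u).erase u1).card ≤ n
        have h1c : (S.erase u).card = S.card - 1 := Finset.card_erase_of_mem huS
        have h2c := Finset.card_erase_le (s := S.erase u) (a := u1)
        omega
      have hu2S' : u2 ∈ S' := (hmemS' u2).mpr ⟨hu2S, hu2u, h2.ne'⟩
      have hvS' : v ∈ S' := (hmemS' v).mpr ⟨hvS, Ne.symm huv, Ne.symm hu1v⟩
      -- the invariants for S'
      have hMin' : ∀ e ∈ M, ∀ x ∈ e, x ∈ S' → ∀ y ∈ e, y ∈ S' := by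
        intro e heM x hxe hxS' y hye
        obtain ⟨hxS, hxu, hxu1⟩ := (hmemS' x).mp hxS'
        have hyS : y ∈ S := hMin e heM x hxe hxS y hye
        refine (hmemS' y).mpr ⟨hyS, ?_, ?_⟩
        · intro hyu
          by_cases hee : e = s(u, u1)
          · rcases Sym2.mem_iff.mp (hee ▸ hxe) with rfl | rfl
            · exact hxu rfl
            · exact hxu1 rfl
          · exact hMd _ heM _ he1M hee u (hyu ▸ hye) (by simp)
        · intro hyu1
          by_cases hee : e = s(u, u1)
          · rcases Sym2.mem_iff.mp (hee ▸ hxe) with rfl | rfl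
            · exact hxu rfl
            · exact hxu1 rfl
          · exact hMd _ heM _ he1M hee u1 (hyu1 ▸ hye) (by simp)
      have hNavoid' : ∀ e ∈ N, (∀ x ∈ e, x ∈ S') → u2 ∉ e := by
        intro e heN heS' hu2e
        by_cases hee : e = s(u1, u2)
        · have : u1 ∈ S' := heS' u1 (hee ▸ (by simp))
          exact ((hmemS' u1).mp this).2.2 rfl
        · exact hNd _ heN _ hgN hee u2 hu2e (by simp)
      have hNin' : ∀ e ∈ N, ∀ x ∈ e, x ∈ S' → x ≠ u2 → ∀ y ∈ e, y ∈ S' := by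
        intro e heN x hxe hxS' hxu2 y hye
        obtain ⟨hxS, hxu, hxu1⟩ := (hmemS' x).mp hxS'
        have hyS : y ∈ S := hNin e heN x hxe hxS hxu y hye
        refine (hmemS' y).mpr ⟨hyS, ?_, ?_⟩
        · intro hyu
          have heS : ∀ z ∈ e, z ∈ S := by
            intro z hz
            exact hNin e heN x hxe hxS hxu z hz
          exact hNavoid e heN heS (hyu ▸ hye)
        · intro hyu1
          by_cases hee : e = s(u1, u2)
          · rcases Sym2.mem_iff.mp (hee ▸ hxe) with rfl | rfl
            · exact hxu1 rfl
            · exact hxu2 rfl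
          · exact hNd _ heN _ hgN hee u1 (hyu1 ▸ hye) (by simp)
      have hNcov' : ∀ w ∈ S', w ≠ u2 → ∃ e ∈ N, w ∈ e := by
        intro w hwS' _
        obtain ⟨hwS, hwu, -⟩ := (hmemS' w).mp hwS'
        exact hNcov w hwS hwu
      obtain ⟨p', hp', hp'S⟩ := ih S' u2 hcard' hu2S' hvS' hMin' hNavoid' hNin' hNcov'
      obtain ⟨hp'path, hp'even, hp'alt, hp'head⟩ := hp'
      have hu1p' : u1 ∉ p'.support := fun h => ((hmemS' u1).mp (hp'S u1 h)).2.2 rfl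
      have hup' : u ∉ p'.support := fun h => ((hmemS' u).mp (hp'S u h)).2.1 rfl
      refine ⟨SimpleGraph.Walk.cons h1 (SimpleGraph.Walk.cons h2 p'), ⟨?_, ?_, ?_, ?_⟩, ?_⟩
      · rw [SimpleGraph.Walk.cons_isPath_iff, SimpleGraph.Walk.cons_isPath_iff]
        refine ⟨⟨hp'path, hu1p'⟩, ?_⟩
        rw [SimpleGraph.Walk.support_cons, List.mem_cons]
        push_neg
        exact ⟨h1.ne, hup'⟩
      · obtain ⟨k, hk⟩ := hp'even
        exact ⟨k + 1, by simp [SimpleGraph.Walk.length_cons]; omega⟩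
      · -- MAlternating
        intro e he f hf heM hfM hnef x hxe hxf
        simp only [SimpleGraph.Walk.edges_cons, List.mem_cons] at he hf
        have hstart : ∀ f' ∈ p'.edges, f' ∉ M → u2 ∉ f' ∧ u1 ∉ f' := by
          intro f' hf' hf'M
          constructor
          · intro hu2f'
            exact hf'M (aux_start_edge_mem ⟨hp'path, hp'even, hp'alt, hp'head⟩ hf' hu2f')
          · intro hu1f'
            exact hu1p' (aux_mem_support_of_mem_edges hf' hu1f')
        rcases he with rfl | rfl | he
        · exact heM he1M
        · rcases hf with rfl | rfl | hf
          · exact hfM he1M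
          · exact hnef rfl
          · rcases Sym2.mem_iff.mp hxe with rfl | rfl
            · exact (hstart f hf hfM).2 hxf
            · exact (hstart f hf hfM).1 hxf
        · rcases hf with rfl | rfl | hf
          · exact hfM he1M
          · rcases Sym2.mem_iff.mp hxf with rfl | rfl
            · exact (hstart e he heM).2 hxe
            · exact (hstart e he heM).1 hxe
          · exact hp'alt e he f hf heM hfM hnef x hxe hxf
      · intro e he
        rw [SimpleGraph.Walk.edges_cons, List.head?_cons, Option.mem_def,
          Option.some.injEq] at he
        exact he ▸ he1M
      · intro x hx
        simp only [SimpleGraph.Walk.support_cons, List.mem_cons] at hx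
        rcases hx with rfl | rfl | hx
        · exact huS
        · exact hu1S
        · exact ((hmemS' x).mp (hp'S x hx)).1

end AuxStatement0

/-- Let `G` be a finite simple graph and `M` a near-perfect matching of `G`
whose unique exposed vertex is `v`. Then `G` is factor-critical if and only if for every
vertex `u` of `G` there exists an `M`-balanced path from `u` to `v`. -/
theorem statement_0 {V : Type*} [Fintype V] (G : SimpleGraph V) (M : Set (Sym2 V)) (v : V)
    (hM : IsNearPerfectMatchingSet G M v) :
    FactorCritical G ↔ ∀ u : V, ∃ p : G.Walk u v, IsBalancedPath M p := by
  classical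
  constructor
  · intro hFC u
    obtain ⟨N, ⟨hNG, hNd⟩, hNin, hNcov⟩ := hFC u
    obtain ⟨p, hp, -⟩ := aux_build_path hM hNG hNd (Fintype.card V) Finset.univ u
      (le_of_eq (Finset.card_univ)) (Finset.mem_univ u) (Finset.mem_univ v)
      (fun e _ x _ _ y _ => Finset.mem_univ y)
      (fun e heN _ hue => by simpa using hNin e heN u hue)
      (fun e _ x _ _ _ y _ => Finset.mem_univ y)
      (fun w _ hwu => hNcov w (Set.mem_compl_singleton_iff.mpr hwu))
    exact ⟨p, hp⟩
  · intro h w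
    obtain ⟨p, hp⟩ := h w
    exact aux_toHasPMOn hM p hp
end

section
/- Let G be a factor-critical finite simple graph, v ∈ V(G), and M a near-perfect matching of G exposing v. Then for every edge e = vu of G there exists a cycle C in G containing e such that C is nice (i.e., G − V(C) has a perfect matching) and C is an M-ear relative to {v}, i.e., exactly one vertex of C lies in {v} and C − v is an M-saturated path. -/
open SimpleGraph

variable {V : Type*}

section AuxiliaryForStatement1

variable {V : Type*}

private lemma matching_eq_of_mem {M : Set (Sym2 V)} (hd : DisjointEdges M)
    {e f : Sym2 V} (he : e ∈ M) (hf : f ∈ M) {x : V} (hxe : x ∈ e) (hxf : x ∈ f) : e = f := by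
  by_contra hne
  exact hd e he f hf hne x hxe hxf

private lemma mem_support_of_mem_edges' {G : SimpleGraph V} {a b : V} {p : G.Walk a b}
    {e : Sym2 V} (he : e ∈ p.edges) {x : V} (hx : x ∈ e) : x ∈ p.support := by
  induction e using Sym2.ind with
  | _ c d =>
    rcases Sym2.mem_iff.mp hx with rfl | rfl
    · exact p.fst_mem_support_of_mem_edges he
    · exact p.snd_mem_support_of_mem_edges he

private lemma loop_isPath_length_zero {G : SimpleGraph V} {a : V} {p : G.Walk a a}
    (hp : p.IsPath) : p.length = 0 := by
  cases p with
  | nil => rfl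
  | cons h q =>
    exfalso
    rw [SimpleGraph.Walk.cons_isPath_iff] at hp
    exact hp.2 q.end_mem_support

private lemma buildPath {V : Type*} [Fintype V] [DecidableEq V] {G : SimpleGraph V}
    {M M' : Set (Sym2 V)} {v u : V}
    (hMsub : M ⊆ G.edgeSet) (hMdisj : DisjointEdges M)
    (hMv : ∀ e ∈ M, v ∉ e) (hMcov : ∀ w : V, w ≠ v → ∃ e ∈ M, w ∈ e)
    (hM'sub : M' ⊆ G.edgeSet) (hM'disj : DisjointEdges M')
    (hM'u : ∀ e ∈ M', u ∉ e) (hM'cov : ∀ w : V, w ≠ u → ∃ e ∈ M', w ∈ e) :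
    ∀ (n : ℕ) (S : Finset V) (x : V), Sᶜ.card ≤ n → x ∉ S → u ∉ S →
    (∀ s ∈ S, ∀ e ∈ M', s ∈ e → ∀ t ∈ e, t ∈ S) →
    (∀ s ∈ S, ∀ e ∈ M, s ∈ e → ∀ t ∈ e, t ∈ S ∨ t = x) →
    (x = v ∨ ∃ e ∈ M, x ∈ e ∧ ∀ t ∈ e, t ∈ S ∨ t = x) →
    (v ∈ S ∨ v = x) →
    ∃ p : G.Walk x u, p.IsPath ∧ (∀ w ∈ p.support, w ∉ S) ∧ Even p.length ∧
      (∀ w ∈ p.support, w ≠ x → ∃ e ∈ p.edges, e ∈ M ∧ w ∈ e) := by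
  intro n
  induction n with
  | zero =>
    intro S x hcard hxS _ _ _ _ _
    exfalso
    have hx : x ∈ Sᶜ := Finset.mem_compl.mpr hxS
    have := Finset.card_pos.mpr ⟨x, hx⟩
    omega
  | succ n ih =>
    intro S x hcard hxS huS hInvM' hInvM hInvX hvS
    by_cases hxu : x = u
    · subst hxu
      exact ⟨SimpleGraph.Walk.nil, SimpleGraph.Walk.IsPath.nil,
        by simpa using hxS, by simp, by simp⟩
    · obtain ⟨e, heM', hxe⟩ := hM'cov x hxu
      obtain ⟨y, rfl⟩ := Sym2.mem_iff_exists.mp hxe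
      have hxy : G.Adj x y := hM'sub heM'
      have hyu : y ≠ u := fun h => hM'u _ heM' (h ▸ Sym2.mem_mk_right x y)
      have hyS : y ∉ S := fun hy =>
        hxS (hInvM' y hy _ heM' (Sym2.mem_mk_right x y) x (Sym2.mem_mk_left x y))
      have hyx : y ≠ x := hxy.ne'
      have hyv : y ≠ v := by
        rintro rfl
        rcases hvS with hv | hv
        · exact hxS (hInvM' _ hv _ heM' (Sym2.mem_mk_right x _) x (Sym2.mem_mk_left x _))
        · exact hyx hv
      obtain ⟨f, hfM, hyf⟩ := hMcov y hyv
      obtain ⟨z, rfl⟩ := Sym2.mem_iff_exists.mp hyf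
      have hyz : G.Adj y z := hMsub hfM
      have hzS : z ∉ S := by
        intro hz
        rcases hInvM z hz _ hfM (Sym2.mem_mk_right y z) y (Sym2.mem_mk_left y z) with h | h
        · exact hyS h
        · exact hyx h
      have hzx : z ≠ x := by
        intro hzx
        have hxf : x ∈ s(y, z) := by rw [← hzx]; exact Sym2.mem_mk_right y z
        rcases hInvX with hxv | ⟨g, hgM, hxg, hgS⟩
        · exact hMv _ hfM (by rwa [hxv] at hxf)
        · have hfg : s(y, z) = g := matching_eq_of_mem hMdisj hfM hgM hxf hxg
          rcases hgS y (by rw [← hfg]; exact Sym2.mem_mk_left y z) with h | h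
          · exact hyS h
          · exact hyx h
      have hzy : z ≠ y := hyz.ne'
      set S' : Finset V := insert x (insert y S) with hS'
      have hzS' : z ∉ S' := by simp [hS', hzx, hzy, hzS]
      have huS' : u ∉ S' := by simp [hS', Ne.symm hxu, Ne.symm hyu, huS]
      have hcard' : S'ᶜ.card ≤ n := by
        have hx' : x ∈ Sᶜ := Finset.mem_compl.mpr hxS
        have hsub : S'ᶜ ⊆ Sᶜ.erase x := by
          intro t ht
          simp only [Finset.mem_compl, hS', Finset.mem_insert, not_or] at ht
          exact Finset.mem_erase.mpr ⟨ht.1, Finset.mem_compl.mpr ht.2.2⟩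
        have h1 := Finset.card_le_card hsub
        have h2 := Finset.card_erase_lt_of_mem hx'
        omega
      have hInvM'2 : ∀ s ∈ S', ∀ e ∈ M', s ∈ e → ∀ t ∈ e, t ∈ S' := by
        intro s hs e' he' hse' t hte'
        rcases Finset.mem_insert.mp hs with rfl | hs
        · have : e' = s(s, y) := matching_eq_of_mem hM'disj he' heM' hse' (Sym2.mem_mk_left s y)
          subst this
          rcases Sym2.mem_iff.mp hte' with rfl | rfl
          · exact Finset.mem_insert_self _ _
          · exact Finset.mem_insert.mpr (Or.inr (Finset.mem_insert_self _ _))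
        rcases Finset.mem_insert.mp hs with rfl | hs
        · have : e' = s(x, s) := matching_eq_of_mem hM'disj he' heM' hse' (Sym2.mem_mk_right x s)
          subst this
          rcases Sym2.mem_iff.mp hte' with rfl | rfl
          · exact Finset.mem_insert_self _ _
          · exact Finset.mem_insert.mpr (Or.inr (Finset.mem_insert_self _ _))
        · exact Finset.mem_insert.mpr (Or.inr (Finset.mem_insert.mpr
            (Or.inr (hInvM' s hs e' he' hse' t hte'))))
      have hInvM2 : ∀ s ∈ S', ∀ e ∈ M, s ∈ e → ∀ t ∈ e, t ∈ S' ∨ t = z := by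
        intro s hs e' he' hse' t hte'
        rcases Finset.mem_insert.mp hs with rfl | hs
        · rcases hInvX with rfl | ⟨g, hgM, hxg, hgS⟩
          · exact absurd hse' (hMv _ he')
          · have : e' = g := matching_eq_of_mem hMdisj he' hgM hse' hxg
            subst this
            rcases hgS t hte' with h | rfl
            · exact Or.inl (Finset.mem_insert.mpr (Or.inr (Finset.mem_insert.mpr (Or.inr h))))
            · exact Or.inl (Finset.mem_insert_self _ _)
        rcases Finset.mem_insert.mp hs with rfl | hs
        · have : e' = s(s, z) := matching_eq_of_mem hMdisj he' hfM hse' (Sym2.mem_mk_left s z)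
          subst this
          rcases Sym2.mem_iff.mp hte' with rfl | rfl
          · exact Or.inl (Finset.mem_insert.mpr (Or.inr (Finset.mem_insert_self _ _)))
          · exact Or.inr rfl
        · rcases hInvM s hs e' he' hse' t hte' with h | rfl
          · exact Or.inl (Finset.mem_insert.mpr (Or.inr (Finset.mem_insert.mpr (Or.inr h))))
          · exact Or.inl (Finset.mem_insert_self _ _)
      have hInvX2 : z = v ∨ ∃ e ∈ M, z ∈ e ∧ ∀ t ∈ e, t ∈ S' ∨ t = z := by
        refine Or.inr ⟨s(y, z), hfM, Sym2.mem_mk_right y z, ?_⟩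
        intro t ht
        rcases Sym2.mem_iff.mp ht with rfl | rfl
        · exact Or.inl (Finset.mem_insert.mpr (Or.inr (Finset.mem_insert_self _ _)))
        · exact Or.inr rfl
      have hvS2 : v ∈ S' ∨ v = z := by
        rcases hvS with hv | rfl
        · exact Or.inl (Finset.mem_insert.mpr (Or.inr (Finset.mem_insert.mpr (Or.inr hv))))
        · exact Or.inl (Finset.mem_insert_self _ _)
      obtain ⟨p, hp1, hp2, hp3, hp4⟩ := ih S' z hcard' hzS' huS' hInvM'2 hInvM2 hInvX2 hvS2
      have hyp : y ∉ p.support := fun h =>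
        hp2 y h (Finset.mem_insert.mpr (Or.inr (Finset.mem_insert_self _ _)))
      have hxp : x ∉ p.support := fun h => hp2 x h (Finset.mem_insert_self _ _)
      refine ⟨SimpleGraph.Walk.cons hxy (SimpleGraph.Walk.cons hyz p), ?_, ?_, ?_, ?_⟩
      · refine SimpleGraph.Walk.IsPath.cons (SimpleGraph.Walk.IsPath.cons hp1 hyp) ?_
        simp only [SimpleGraph.Walk.support_cons, List.mem_cons, not_or]
        exact ⟨Ne.symm hyx, hxp⟩
      · intro w hw
        simp only [SimpleGraph.Walk.support_cons, List.mem_cons] at hw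
        rcases hw with rfl | rfl | hw
        · exact hxS
        · exact hyS
        · intro hwS
          exact hp2 w hw (Finset.mem_insert.mpr (Or.inr (Finset.mem_insert.mpr (Or.inr hwS))))
      · obtain ⟨k, hk⟩ := hp3
        exact ⟨k + 1, by simp only [SimpleGraph.Walk.length_cons]; omega⟩
      · intro w hw hwx
        simp only [SimpleGraph.Walk.support_cons, List.mem_cons] at hw
        rcases hw with rfl | rfl | hw
        · exact absurd rfl hwx
        · exact ⟨s(w, z), by simp, hfM, Sym2.mem_mk_left w z⟩
        · by_cases hwz : w = z
          · subst hwz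
            exact ⟨s(y, w), by simp, hfM, Sym2.mem_mk_right y w⟩
          · obtain ⟨e', he1, he2, he3⟩ := hp4 w hw hwz
            exact ⟨e', by simp [he1], he2, he3⟩

end AuxiliaryForStatement1

/-- Let `G` be a factor-critical finite simple graph, `v ∈ V(G)`, and `M`
a near-perfect matching of `G` exposing `v`. Then for every edge `e = vu` of `G` there is a
cycle `C` in `G` containing `e` such that `C` is nice (`G − V(C)` has a perfect matching)
and `C` is an `M`-ear relative to `{v}`. -/
theorem statement_1 {V : Type*} [Fintype V] (G : SimpleGraph V) (hG : FactorCritical G)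
    (v : V) (M : Set (Sym2 V)) (hM : IsNearPerfectMatchingSet G M v)
    (u : V) (he : G.Adj v u) :
    ∃ p : G.Walk v v, p.IsCycle ∧ s(v, u) ∈ p.edges ∧
      HasPMOn G {x : V | x ∈ p.support}ᶜ ∧ IsMEar G M {v} p := by
  classical
  obtain ⟨⟨hMsub, hMdisj⟩, hMv, hMcov⟩ := hM
  obtain ⟨M', ⟨hM'sub, hM'disj⟩, hM'in, hM'cov0⟩ := hG u
  have hM'u : ∀ e ∈ M', u ∉ e := fun e heM' hu => (hM'in e heM' u hu) rfl
  have hM'cov : ∀ w : V, w ≠ u → ∃ e ∈ M', w ∈ e := fun w hw =>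
    hM'cov0 w (by simp [hw])
  obtain ⟨p, hp1, hp2, hp3, hp4⟩ :=
    buildPath hMsub hMdisj hMv hMcov hM'sub hM'disj hM'u hM'cov
      (Fintype.card V) ∅ v (by simp) (by simp) (by simp)
      (by simp) (by simp) (Or.inl rfl) (Or.inr rfl)
  have hvu : v ≠ u := he.ne
  obtain ⟨y, h1, q, rfl⟩ := SimpleGraph.Walk.exists_eq_cons_of_ne hvu p
  rw [SimpleGraph.Walk.cons_isPath_iff] at hp1
  obtain ⟨hq_path, hvq⟩ := hp1
  have hqodd : Odd q.length := by
    rw [SimpleGraph.Walk.length_cons] at hp3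
    rcases Nat.even_or_odd q.length with h | h
    · exact absurd hp3 (by simpa [Nat.even_add_one] using h)
    · exact h
  have hyu : y ≠ u := by
    rintro rfl
    have h0 := loop_isPath_length_zero hq_path
    rw [SimpleGraph.Walk.length_cons, h0] at hp3
    simp at hp3
  -- the cycle
  refine ⟨SimpleGraph.Walk.cons h1 (q.concat he.symm), ?_, ?_, ?_, ?_⟩
  case _ =>
    rw [SimpleGraph.Walk.cons_isCycle_iff]
    constructor
    · rw [SimpleGraph.Walk.isPath_def, SimpleGraph.Walk.support_concat,
        List.nodup_append]
      exact ⟨hq_path.support_nodup, List.nodup_singleton v,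
        fun a ha b hb hab => hvq (by rw [← List.mem_singleton.mp hb, ← hab]; exact ha)⟩
    · rw [SimpleGraph.Walk.edges_concat, List.concat_eq_append]
      intro hmem
      rcases List.mem_append.mp hmem with hmem | hmem
      · exact hvq (mem_support_of_mem_edges' hmem (Sym2.mem_mk_left v y))
      · rw [List.mem_singleton] at hmem
        rcases Sym2.eq_iff.mp hmem with ⟨h', _⟩ | ⟨_, h'⟩
        · exact hvu h'
        · exact hyu h'
  case _ =>
    rw [SimpleGraph.Walk.edges_cons, SimpleGraph.Walk.edges_concat,
      List.concat_eq_append]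
    exact List.mem_cons.mpr (Or.inr (List.mem_append.mpr (Or.inr
      (List.mem_singleton.mpr Sym2.eq_swap))))
  case _ =>
    -- HasPMOn
    have hCsupp : ∀ w : V, w ∈ (SimpleGraph.Walk.cons h1 (q.concat he.symm)).support ↔
        w ∈ (SimpleGraph.Walk.cons h1 q).support := by
      intro w
      simp only [SimpleGraph.Walk.support_cons, SimpleGraph.Walk.support_concat,
        List.concat_eq_append, List.mem_cons, List.mem_append, List.mem_singleton]
      tauto
    refine ⟨{e ∈ M | ∀ x ∈ e, x ∉ (SimpleGraph.Walk.cons h1 q).support}, ⟨?_, ?_⟩, ?_, ?_⟩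
    · exact fun e he' => hMsub he'.1
    · exact fun e he' f hf' hne x => hMdisj e he'.1 f hf'.1 hne x
    · intro e he' x hx
      simp only [Set.mem_compl_iff, Set.mem_setOf_eq]
      intro hmem
      exact he'.2 x hx ((hCsupp x).mp hmem)
    · intro w hw
      simp only [Set.mem_compl_iff, Set.mem_setOf_eq] at hw
      have hw' : w ∉ (SimpleGraph.Walk.cons h1 q).support := fun h => hw ((hCsupp w).mpr h)
      have hwv : w ≠ v := by
        rintro rfl
        exact hw' (SimpleGraph.Walk.start_mem_support _)
      obtain ⟨e, heM, hwe⟩ := hMcov w hwv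
      refine ⟨e, ⟨heM, ?_⟩, hwe⟩
      intro t ht hts
      by_cases htv : t = v
      · exact hMv e heM (htv ▸ ht)
      · obtain ⟨f, hfe, hfM, htf⟩ := hp4 t hts htv
        have hef : e = f := matching_eq_of_mem hMdisj heM hfM ht htf
        exact hw' (mem_support_of_mem_edges' (hef ▸ hfe) hwe)
  case _ =>
    refine ⟨rfl, rfl, Or.inl ⟨rfl, ?_⟩, y, u, h1, q, he.symm, rfl, ⟨hq_path, hqodd, ?_⟩, ?_⟩
    · rw [SimpleGraph.Walk.copy_rfl_rfl]
      rw [SimpleGraph.Walk.cons_isCycle_iff]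
      constructor
      · rw [SimpleGraph.Walk.isPath_def, SimpleGraph.Walk.support_concat,
          List.nodup_append]
        exact ⟨hq_path.support_nodup, List.nodup_singleton v,
          fun a ha b hb hab => hvq (by rw [← List.mem_singleton.mp hb, ← hab]; exact ha)⟩
      · rw [SimpleGraph.Walk.edges_concat, List.concat_eq_append]
        intro hmem
        rcases List.mem_append.mp hmem with hmem | hmem
        · exact hvq (mem_support_of_mem_edges' hmem (Sym2.mem_mk_left v y))
        · rw [List.mem_singleton] at hmem
          rcases Sym2.eq_iff.mp hmem with ⟨h', _⟩ | ⟨_, h'⟩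
          · exact hvu h'
          · exact hyu h'
    · intro t ht
      have htv : t ≠ v := fun h => hvq (h ▸ ht)
      obtain ⟨f, hfe, hfM, htf⟩ := hp4 t
        (by rw [SimpleGraph.Walk.support_cons]; exact List.mem_cons.mpr (Or.inr ht)) htv
      rw [SimpleGraph.Walk.edges_cons] at hfe
      rcases List.mem_cons.mp hfe with rfl | hfe
      · exact absurd (Sym2.mem_mk_left v y) (hMv _ hfM)
      · exact ⟨f, hfe, hfM, htf⟩
    · intro w hw
      intro hwv
      exact hvq (by rwa [Set.mem_singleton_iff.mp hwv] at hw)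
end

section
/- Let G be a factorizable finite simple graph, M a perfect matching of G, G1 a factor-component of G, and X ⊆ V(G) a separating set with V(G1) ⊆ X. Then X is a critical-inducing set for G1 (i.e., G[X]/G1 is factor-critical) if and only if for every x ∈ X ∖ V(G1) there exists y ∈ V(G1) such that there is an M-balanced path from x to y all of whose vertices except y lie in X ∖ V(G1). -/
open SimpleGraph

variable {V : Type*}

section Aux

variable {V : Type*} {G : SimpleGraph V}

lemma disjointEdges_subset {M N : Set (Sym2 V)} (h : N ⊆ M) (hM : DisjointEdges M) :
    DisjointEdges N := fun e he f hf hne => hM e (h he) f (h hf) hne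

lemma edge_repr {e : Sym2 V} (he : e ∈ G.edgeSet) {x : V} (hx : x ∈ e) :
    ∃ y, e = s(x, y) ∧ G.Adj x y := by
  obtain ⟨y, rfl⟩ := Sym2.mem_iff_exists.mp hx
  exact ⟨y, rfl, (SimpleGraph.mem_edgeSet G).mp he⟩

lemma mem_support_of_mem_edges'_s6 {u v : V} {p : G.Walk u v} {e : Sym2 V} {z : V}
    (he : e ∈ p.edges) (hz : z ∈ e) : z ∈ p.support := by
  obtain ⟨y, rfl⟩ := Sym2.mem_iff_exists.mp hz
  exact p.fst_mem_support_of_mem_edges he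

lemma path_start_ne_end {u v : V} {p : G.Walk u v} (hp : p.IsPath) (h : 0 < p.length) :
    u ≠ v := by
  rintro rfl
  cases p with
  | nil => simp at h
  | cons h' q =>
    rw [SimpleGraph.Walk.cons_isPath_iff] at hp
    exact hp.2 q.end_mem_support

/-- Lemma A: from a near-perfect matching structure, extract a balanced path. -/
lemma lemmaA : ∀ (n : ℕ) {A : Set V} {s x : V}, A.Finite → A.ncard = n → s ∉ A → x ∈ A →
    ∀ {M1 N1 : Set (Sym2 V)},
    M1 ⊆ G.edgeSet → DisjointEdges M1 → (∀ e ∈ M1, ∀ z ∈ e, z ∈ A) →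
    (∀ z ∈ A, ∃ e ∈ M1, z ∈ e) →
    N1 ⊆ G.edgeSet → DisjointEdges N1 → (∀ e ∈ N1, ∀ z ∈ e, z ∈ A ∪ {s}) →
    (∀ e ∈ N1, x ∉ e) → (∀ z ∈ (A ∪ {s}) \ {x}, ∃ e ∈ N1, z ∈ e) →
    ∃ p : G.Walk x s, p.IsPath ∧ Even p.length ∧ 0 < p.length ∧
      (∀ w ∈ p.support, w ≠ s → w ∈ A) ∧ (∀ e ∈ p.edges.head?, e ∈ M1) ∧
      (∀ e ∈ p.edges, e ∉ M1 → e ∈ N1) := by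
  intro n
  induction n using Nat.strong_induction_on with
  | _ n ih =>
  intro A s x hAfin hcard hsA hxA M1 N1 hM1G hM1d hM1A hM1cov hN1G hN1d hN1A hN1x hN1cov
  obtain ⟨e0, he0M, hxe0⟩ := hM1cov x hxA
  obtain ⟨v, he0eq, hadjxv⟩ := edge_repr (hM1G he0M) hxe0
  have hve0 : v ∈ e0 := he0eq ▸ Sym2.mem_mk_right x v
  have hvA : v ∈ A := hM1A e0 he0M v hve0
  have hvx : v ≠ x := fun h => hadjxv.ne h.symm
  have hxs : x ≠ s := fun h => hsA (h ▸ hxA)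
  have hvs : v ≠ s := fun h => hsA (h ▸ hvA)
  obtain ⟨f, hfN, hvf⟩ := hN1cov v ⟨Or.inl hvA, hvx⟩
  obtain ⟨u, hfeq, hadjvu⟩ := edge_repr (hN1G hfN) hvf
  have huf : u ∈ f := hfeq ▸ Sym2.mem_mk_right v u
  have hxf : x ∉ f := hN1x f hfN
  have hux : u ≠ x := fun h => hxf (h ▸ huf)
  have huv : u ≠ v := hadjvu.ne'
  have hM1uniq : ∀ g ∈ M1, x ∈ g ∨ v ∈ g → g = e0 := by
    intro g hg hmem
    by_contra hne
    rcases hmem with h | h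
    · exact hM1d g hg e0 he0M hne x h hxe0
    · exact hM1d g hg e0 he0M hne v h hve0
  have hN1uniq : ∀ g ∈ N1, v ∈ g ∨ u ∈ g → g = f := by
    intro g hg hmem
    by_contra hne
    rcases hmem with h | h
    · exact hN1d g hg f hfN hne v h hvf
    · exact hN1d g hg f hfN hne u h huf
  by_cases hus : u = s
  · subst hus
    refine ⟨(SimpleGraph.Walk.cons hadjvu .nil).cons hadjxv, ?_, ?_, ?_, ?_, ?_, ?_⟩
    · simp [SimpleGraph.Walk.cons_isPath_iff, hvx.symm, hxs, huv.symm]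
    · simp
    · simp
    · intro w hw hws
      simp [SimpleGraph.Walk.support_cons] at hw
      rcases hw with rfl | rfl | rfl
      · exact hxA
      · exact hvA
      · exact absurd rfl hws
    · intro e he
      simp at he
      exact he ▸ (he0eq ▸ he0M)
    · intro e he _
      simp at he
      rcases he with rfl | rfl
      · exact absurd (he0eq ▸ he0M) ‹_›
      · exact hfeq ▸ hfN
  · have huA : u ∈ A := by
      rcases hN1A f hfN u huf with h | h
      · exact h
      · exact absurd h hus
    set A' := A \ {x, v} with hA'
    have hxA' : x ∉ A' := fun h => h.2 (Or.inl rfl)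
    have hvA' : v ∉ A' := fun h => h.2 (Or.inr rfl)
    have hA'ss : A' ⊂ A := ⟨Set.diff_subset, fun h => hxA' (h hxA)⟩
    have hA'lt : A'.ncard < n := hcard ▸ Set.ncard_lt_ncard hA'ss hAfin
    have huA' : u ∈ A' := ⟨huA, by simp [hux, huv]⟩
    have hsA' : s ∉ A' := fun h => hsA h.1
    set M1' := {g ∈ M1 | x ∉ g ∧ v ∉ g} with hM1'
    set N1' := {g ∈ N1 | v ∉ g} with hN1'
    have hM1'G : M1' ⊆ G.edgeSet := fun g hg => hM1G hg.1
    have hN1'G : N1' ⊆ G.edgeSet := fun g hg => hN1G hg.1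
    have hM1'd : DisjointEdges M1' := disjointEdges_subset (fun g hg => hg.1) hM1d
    have hN1'd : DisjointEdges N1' := disjointEdges_subset (fun g hg => hg.1) hN1d
    have hM1'A : ∀ g ∈ M1', ∀ z ∈ g, z ∈ A' := by
      rintro g ⟨hg, hgx, hgv⟩ z hz
      refine ⟨hM1A g hg z hz, ?_⟩
      rintro (rfl | rfl)
      · exact hgx hz
      · exact hgv hz
    have hM1'cov : ∀ z ∈ A', ∃ g ∈ M1', z ∈ g := by
      rintro z ⟨hzA, hz⟩
      obtain ⟨g, hg, hzg⟩ := hM1cov z hzA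
      refine ⟨g, ⟨hg, ?_, ?_⟩, hzg⟩
      · intro hxg
        have := hM1uniq g hg (Or.inl hxg)
        subst this
        rw [he0eq, Sym2.mem_iff] at hzg
        exact hz (by tauto)
      · intro hvg
        have := hM1uniq g hg (Or.inr hvg)
        subst this
        rw [he0eq, Sym2.mem_iff] at hzg
        exact hz (by tauto)
    have hN1'A : ∀ g ∈ N1', ∀ z ∈ g, z ∈ A' ∪ {s} := by
      rintro g ⟨hg, hgv⟩ z hz
      rcases hN1A g hg z hz with h | h
      · exact Or.inl ⟨h, by rintro (rfl | rfl); exact hN1x g hg hz; exact hgv hz⟩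
      · exact Or.inr h
    have hN1'u : ∀ g ∈ N1', u ∉ g := by
      rintro g ⟨hg, hgv⟩ hug
      have := hN1uniq g hg (Or.inr hug)
      subst this
      exact hgv hvf
    have hN1'cov : ∀ z ∈ (A' ∪ {s}) \ {u}, ∃ g ∈ N1', z ∈ g := by
      rintro z ⟨hz, hzu⟩
      have hzx : z ≠ x := by
        rintro rfl
        rcases hz with h | h
        · exact hxA' h
        · exact hxs h
      have hzAs : z ∈ (A ∪ {s}) \ {x} := by
        refine ⟨?_, hzx⟩
        rcases hz with h | h
        · exact Or.inl h.1
        · exact Or.inr h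
      obtain ⟨g, hg, hzg⟩ := hN1cov z hzAs
      refine ⟨g, ⟨hg, ?_⟩, hzg⟩
      intro hvg
      have := hN1uniq g hg (Or.inl hvg)
      subst this
      rw [hfeq, Sym2.mem_iff] at hzg
      rcases hzg with rfl | rfl
      · rcases hz with h | h
        · exact hvA' h
        · exact hvs h
      · exact hzu rfl
    obtain ⟨p', hp'path, hp'even, hp'pos, hp'sup, hp'head, hp'alt⟩ :=
      ih A'.ncard hA'lt (hAfin.subset Set.diff_subset) rfl hsA' huA'
        hM1'G hM1'd hM1'A hM1'cov hN1'G hN1'd hN1'A hN1'u hN1'cov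
    have hp'supA : ∀ w ∈ p'.support, w ∈ A' ∪ {s} := by
      intro w hw
      by_cases hws : w = s
      · exact Or.inr hws
      · exact Or.inl (hp'sup w hw hws)
    have hvp' : v ∉ p'.support := by
      intro h
      rcases hp'supA v h with h' | h'
      · exact hvA' h'
      · exact hvs h'
    have hxp' : x ∉ p'.support := by
      intro h
      rcases hp'supA x h with h' | h'
      · exact hxA' h'
      · exact hxs h'
    refine ⟨(p'.cons hadjvu).cons hadjxv, ?_, ?_, ?_, ?_, ?_, ?_⟩
    · rw [SimpleGraph.Walk.cons_isPath_iff, SimpleGraph.Walk.cons_isPath_iff]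
      refine ⟨⟨hp'path, hvp'⟩, ?_⟩
      rw [SimpleGraph.Walk.support_cons]
      simp only [List.mem_cons]
      rintro (rfl | h)
      · exact hvx rfl
      · exact hxp' h
    · show Even (p'.length + 1 + 1)
      exact hp'even.add ⟨1, rfl⟩
    · simp [SimpleGraph.Walk.length_cons]
    · intro w hw hws
      rw [SimpleGraph.Walk.support_cons, SimpleGraph.Walk.support_cons] at hw
      simp only [List.mem_cons] at hw
      rcases hw with rfl | rfl | hw
      · exact hxA
      · exact hvA
      · exact (hp'sup w hw hws).1
    · intro e he
      simp only [SimpleGraph.Walk.edges_cons, List.head?] at he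
      simp at he
      exact he ▸ (he0eq ▸ he0M)
    · intro e he heM
      rw [SimpleGraph.Walk.edges_cons, SimpleGraph.Walk.edges_cons] at he
      simp only [List.mem_cons] at he
      rcases he with rfl | rfl | he
      · exact absurd (he0eq ▸ he0M) heM
      · exact hfeq ▸ hfN
      · have : e ∉ M1' := fun h => heM h.1
        exact (hp'alt e he this).1

end Aux


section Aux2

variable {V : Type*} {G : SimpleGraph V}

/-- Lemma B: from a balanced path, construct a near-perfect matching structure. -/
lemma lemmaB : ∀ (n : ℕ) {A : Set V} {s x : V} {M1 : Set (Sym2 V)} (p : G.Walk x s),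
    p.length = n → s ∉ A →
    M1 ⊆ G.edgeSet → DisjointEdges M1 → (∀ e ∈ M1, ∀ z ∈ e, z ∈ A) →
    (∀ z ∈ A, ∃ e ∈ M1, z ∈ e) →
    p.IsPath → Even p.length → 0 < p.length →
    (∀ w ∈ p.support, w ≠ s → w ∈ A) →
    (∀ e ∈ p.edges.head?, e ∈ M1) →
    (∀ e ∈ p.edges, ∀ f ∈ p.edges, e ∉ M1 → f ∉ M1 → e ≠ f → ∀ z, z ∈ e → z ∉ f) →
    ∃ N1 : Set (Sym2 V), N1 ⊆ G.edgeSet ∧ DisjointEdges N1 ∧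
      (∀ e ∈ N1, ∀ z ∈ e, z ∈ A ∪ {s}) ∧ (∀ e ∈ N1, x ∉ e) ∧
      (∀ z ∈ (A ∪ {s}) \ {x}, ∃ e ∈ N1, z ∈ e) := by
  intro n
  induction n using Nat.strong_induction_on with
  | _ n ih =>
  intro A s x M1 p hn hsA hM1G hM1d hM1A hM1cov hp heven hpos hsup hhead halt
  cases p with
  | nil => simp at hpos
  | cons h1 q =>
  rename_i v
  cases q with
  | nil =>
    exfalso
    rw [SimpleGraph.Walk.length_cons, SimpleGraph.Walk.length_nil] at heven
    rcases heven with ⟨k, hk⟩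
    omega
  | cons h2 p2 =>
  rename_i u
  rw [SimpleGraph.Walk.cons_isPath_iff] at hp
  obtain ⟨hp2', hxsup⟩ := hp
  rw [SimpleGraph.Walk.cons_isPath_iff] at hp2'
  obtain ⟨hp2, hvsup⟩ := hp2'
  rw [SimpleGraph.Walk.support_cons, List.mem_cons] at hxsup
  push_neg at hxsup
  obtain ⟨hxv, hxp2⟩ := hxsup
  have hxs : x ≠ s := fun h => hxp2 (h ▸ p2.end_mem_support)
  have hvs : v ≠ s := fun h => hvsup (h ▸ p2.end_mem_support)
  have hxA : x ∈ A := hsup x ((SimpleGraph.Walk.cons h1 (SimpleGraph.Walk.cons h2 p2)).start_mem_support) hxs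
  have hvA : v ∈ A := by
    refine hsup v ?_ hvs
    rw [SimpleGraph.Walk.support_cons, List.mem_cons]
    exact Or.inr (SimpleGraph.Walk.start_mem_support _)
  have he0M : s(x, v) ∈ M1 := by
    apply hhead
    simp [SimpleGraph.Walk.edges_cons]
  have hux : u ≠ x := fun h => hxp2 (h ▸ p2.start_mem_support)
  have huv : u ≠ v := h2.ne'
  have he1e0 : s(v, u) ≠ s(x, v) := by
    intro h
    rw [Sym2.eq_iff] at h
    rcases h with ⟨h, _⟩ | ⟨_, h⟩
    · exact hxv h.symm
    · exact hux h
  have he1M : s(v, u) ∉ M1 := by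
    intro hmem
    exact hM1d _ hmem _ he0M he1e0 v (Sym2.mem_mk_left v u) (Sym2.mem_mk_right x v)
  have hM1uniq : ∀ g ∈ M1, x ∈ g ∨ v ∈ g → g = s(x, v) := by
    intro g hg hmem
    by_contra hne
    rcases hmem with h | h
    · exact hM1d g hg _ he0M hne x h (Sym2.mem_mk_left x v)
    · exact hM1d g hg _ he0M hne v h (Sym2.mem_mk_right x v)
  -- the restricted matching
  set M1' := {g ∈ M1 | x ∉ g ∧ v ∉ g} with hM1'def
  have hM1'G : M1' ⊆ G.edgeSet := fun g hg => hM1G hg.1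
  have hM1'd : DisjointEdges M1' := disjointEdges_subset (fun g hg => hg.1) hM1d
  have hM1'cov' : ∀ z ∈ A, z ≠ x → z ≠ v → ∃ g ∈ M1', z ∈ g := by
    intro z hzA hzx hzv
    obtain ⟨g, hg, hzg⟩ := hM1cov z hzA
    refine ⟨g, ⟨hg, ?_, ?_⟩, hzg⟩
    · intro hxg
      have := hM1uniq g hg (Or.inl hxg)
      subst this
      rw [Sym2.mem_iff] at hzg
      tauto
    · intro hvg
      have := hM1uniq g hg (Or.inr hvg)
      subst this
      rw [Sym2.mem_iff] at hzg
      tauto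
  cases p2 with
  | nil =>
    -- base case : u = s
    refine ⟨insert s(v, s) M1', ?_, ?_, ?_, ?_, ?_⟩
    · rintro g (rfl | hg)
      · exact h2
      · exact hM1G hg.1
    · rintro e (rfl | he) f (rfl | hf) hne z hz hzf
      · exact hne rfl
      · rw [Sym2.mem_iff] at hz
        rcases hz with rfl | rfl
        · exact hf.2.2 hzf
        · exact hsA (hM1A f hf.1 z hzf)
      · rw [Sym2.mem_iff] at hzf
        rcases hzf with rfl | rfl
        · exact he.2.2 hz
        · exact hsA (hM1A e he.1 z hz)
      · exact hM1d e he.1 f hf.1 hne z hz hzf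
    · rintro e (rfl | he) z hz
      · rw [Sym2.mem_iff] at hz
        rcases hz with rfl | rfl
        · exact Or.inl hvA
        · exact Or.inr rfl
      · exact Or.inl (hM1A e he.1 z hz)
    · rintro e (rfl | he) hx
      · rw [Sym2.mem_iff] at hx
        rcases hx with rfl | rfl
        · exact hxv rfl
        · exact hxs rfl
      · exact he.2.1 hx
    · rintro z ⟨hz, hzx⟩
      simp only [Set.mem_singleton_iff] at hzx
      by_cases hzv : z = v
      · exact ⟨s(v, s), Or.inl rfl, by rw [Sym2.mem_iff]; tauto⟩
      rcases hz with hzA | hzs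
      · obtain ⟨g, hg, hzg⟩ := hM1'cov' z hzA hzx hzv
        exact ⟨g, Or.inr hg, hzg⟩
      · exact ⟨s(v, s), Or.inl rfl, by rw [Sym2.mem_iff]; simp at hzs; tauto⟩
  | cons h3 p3 =>
  rename_i t
  -- inductive step
  set p2 := SimpleGraph.Walk.cons h3 p3 with hp2def
  have hus : u ≠ s := path_start_ne_end hp2 (by simp [hp2def])
  have huA : u ∈ A := hsup u (by simp [SimpleGraph.Walk.support_cons]) hus
  have htp2 : t ∈ p2.support := by
    rw [hp2def, SimpleGraph.Walk.support_cons, List.mem_cons]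
    exact Or.inr p3.start_mem_support
  have he2M : s(u, t) ∈ M1 := by
    by_contra he2M
    have he1p : s(v, u) ∈ (SimpleGraph.Walk.cons h1 (SimpleGraph.Walk.cons h2 p2)).edges := by
      simp [SimpleGraph.Walk.edges_cons]
    have he2p : s(u, t) ∈ (SimpleGraph.Walk.cons h1 (SimpleGraph.Walk.cons h2 p2)).edges := by
      simp [hp2def, SimpleGraph.Walk.edges_cons]
    have hne : s(v, u) ≠ s(u, t) := by
      intro h
      rw [Sym2.eq_iff] at h
      rcases h with ⟨h, _⟩ | ⟨h, _⟩
      · exact huv h.symm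
      · exact hvsup (by rw [h]; exact htp2)
    exact halt _ he1p _ he2p he1M he2M hne u (Sym2.mem_mk_right v u) (Sym2.mem_mk_left u t)
  set A' := A \ {x, v} with hA'def
  have hsA' : s ∉ A' := fun h => hsA h.1
  have hM1'A : ∀ g ∈ M1', ∀ z ∈ g, z ∈ A' := by
    rintro g ⟨hg, hgx, hgv⟩ z hz
    refine ⟨hM1A g hg z hz, ?_⟩
    rintro (rfl | rfl)
    · exact hgx hz
    · exact hgv hz
  have hM1'cov : ∀ z ∈ A', ∃ g ∈ M1', z ∈ g := by
    rintro z ⟨hzA, hz⟩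
    simp only [Set.mem_insert_iff, Set.mem_singleton_iff] at hz
    push_neg at hz
    exact hM1'cov' z hzA hz.1 hz.2
  have hsup2 : ∀ w ∈ p2.support, w ≠ s → w ∈ A' := by
    intro w hw hws
    refine ⟨hsup w ?_ hws, ?_⟩
    · rw [SimpleGraph.Walk.support_cons, SimpleGraph.Walk.support_cons]
      simp only [List.mem_cons]
      exact Or.inr (Or.inr hw)
    · rintro (rfl | rfl)
      · exact hxp2 hw
      · exact hvsup hw
  have hhead2 : ∀ e ∈ p2.edges.head?, e ∈ M1' := by
    intro e he
    rw [hp2def] at he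
    simp [SimpleGraph.Walk.edges_cons] at he
    subst he
    refine ⟨he2M, ?_, ?_⟩
    · intro hx
      rw [Sym2.mem_iff] at hx
      rcases hx with rfl | rfl
      · exact hxp2 p2.start_mem_support
      · exact hxp2 htp2
    · intro hv
      rw [Sym2.mem_iff] at hv
      rcases hv with rfl | rfl
      · exact hvsup p2.start_mem_support
      · exact hvsup htp2
  have hedgesub : p2.edges ⊆ (SimpleGraph.Walk.cons h1 (SimpleGraph.Walk.cons h2 p2)).edges := by
    intro e he
    rw [SimpleGraph.Walk.edges_cons, SimpleGraph.Walk.edges_cons]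
    exact List.mem_cons_of_mem _ (List.mem_cons_of_mem _ he)
  have hnotM1 : ∀ e ∈ p2.edges, e ∉ M1' → e ∉ M1 := by
    intro e he heM1' heM1
    have : x ∈ e ∨ v ∈ e := by
      by_contra hcon
      push_neg at hcon
      exact heM1' ⟨heM1, hcon.1, hcon.2⟩
    rcases this with h | h
    · exact hxp2 (mem_support_of_mem_edges'_s6 he h)
    · exact hvsup (mem_support_of_mem_edges'_s6 he h)
  have halt2 : ∀ e ∈ p2.edges, ∀ f ∈ p2.edges, e ∉ M1' → f ∉ M1' → e ≠ f →
      ∀ z, z ∈ e → z ∉ f := by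
    intro e he f hf heM hfM hne
    exact halt e (hedgesub he) f (hedgesub hf) (hnotM1 e he heM) (hnotM1 f hf hfM) hne
  have hlen2 : p2.length < n := by
    simp only [SimpleGraph.Walk.length_cons] at hn
    omega
  have heven2 : Even p2.length := by
    simp only [SimpleGraph.Walk.length_cons] at heven
    rcases heven with ⟨k, hk⟩
    exact ⟨k - 1, by omega⟩
  obtain ⟨N1', hN1'G, hN1'd, hN1'A, hN1'u, hN1'cov⟩ :=
    ih p2.length hlen2 p2 rfl hsA' hM1'G hM1'd hM1'A hM1'cov hp2 heven2 (by simp [hp2def])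
      hsup2 hhead2 halt2
  have hvN1' : ∀ g ∈ N1', v ∉ g := by
    intro g hg hv
    rcases hN1'A g hg v hv with h | h
    · exact h.2 (Or.inr rfl)
    · exact hvs h
  have hxN1' : ∀ g ∈ N1', x ∉ g := by
    intro g hg hx
    rcases hN1'A g hg x hx with h | h
    · exact h.2 (Or.inl rfl)
    · exact hxs h
  refine ⟨insert s(v, u) N1', ?_, ?_, ?_, ?_, ?_⟩
  · rintro g (rfl | hg)
    · exact h2
    · exact hN1'G hg
  · rintro e (rfl | he) f (rfl | hf) hne z hz hzf
    · exact hne rfl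
    · rw [Sym2.mem_iff] at hz
      rcases hz with rfl | rfl
      · exact hvN1' f hf hzf
      · exact hN1'u f hf hzf
    · rw [Sym2.mem_iff] at hzf
      rcases hzf with rfl | rfl
      · exact hvN1' e he hz
      · exact hN1'u e he hz
    · exact hN1'd e he f hf hne z hz hzf
  · rintro e (rfl | he) z hz
    · rw [Sym2.mem_iff] at hz
      rcases hz with rfl | rfl
      · exact Or.inl hvA
      · exact Or.inl huA
    · rcases hN1'A e he z hz with h | h
      · exact Or.inl h.1
      · exact Or.inr h
  · rintro e (rfl | he) hx
    · rw [Sym2.mem_iff] at hx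
      rcases hx with rfl | rfl
      · exact hxv rfl
      · exact hux rfl
    · exact hxN1' e he hx
  · rintro z ⟨hz, hzx⟩
    simp only [Set.mem_singleton_iff] at hzx
    by_cases hzv : z = v
    · exact ⟨s(v, u), Or.inl rfl, by rw [Sym2.mem_iff]; tauto⟩
    by_cases hzu : z = u
    · exact ⟨s(v, u), Or.inl rfl, by rw [Sym2.mem_iff]; tauto⟩
    have : z ∈ (A' ∪ {s}) \ {u} := by
      refine ⟨?_, hzu⟩
      rcases hz with h | h
      · exact Or.inl ⟨h, by rintro (rfl | rfl) <;> [exact hzx rfl; exact hzv rfl]⟩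
      · exact Or.inr h
    obtain ⟨g, hg, hzg⟩ := hN1'cov z this
    exact ⟨g, Or.inr hg, hzg⟩

end Aux2


section Aux3

variable {V : Type*} {G : SimpleGraph V}

lemma lift_eq {A : Set V} {a b c d : ↥A} (h : s(a.1, b.1) = s(c.1, d.1)) :
    s((some a : Option ↥A), some b) = s((some c : Option ↥A), some d) := by
  rw [Sym2.eq_iff] at h ⊢
  rcases h with ⟨h1, h2⟩ | ⟨h1, h2⟩
  · exact Or.inl ⟨congrArg _ (Subtype.ext h1), congrArg _ (Subtype.ext h2)⟩
  · exact Or.inr ⟨congrArg _ (Subtype.ext h1), congrArg _ (Subtype.ext h2)⟩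

lemma unlift_eq {A : Set V} {a b c d : ↥A}
    (h : s((some a : Option ↥A), some b) = s((some c : Option ↥A), some d)) :
    s(a.1, b.1) = s(c.1, d.1) := by
  rw [Sym2.eq_iff] at h ⊢
  rcases h with ⟨h1, h2⟩ | ⟨h1, h2⟩
  · exact Or.inl ⟨congrArg _ (Option.some_injective _ h1),
      congrArg _ (Option.some_injective _ h2)⟩
  · exact Or.inr ⟨congrArg _ (Option.some_injective _ h1),
      congrArg _ (Option.some_injective _ h2)⟩

lemma contract_adj_ss {X S : Set V} {a b : ↥(X \ S)} :
    (contractOn G X S).Adj (some a) (some b) ↔ G.Adj a.1 b.1 := Iff.rfl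

lemma contract_adj_sn {X S : Set V} {a : ↥(X \ S)} :
    (contractOn G X S).Adj (some a) none ↔ ∃ t ∈ S, G.Adj a.1 t := Iff.rfl

end Aux3

/-- Let `G` be a factorizable finite simple graph, `M` a perfect matching,
`G1` a factor-component, and `X` a separating set with `V(G1) ⊆ X`. Then `X` is a
critical-inducing set for `G1` iff for every `x ∈ X ∖ V(G1)` there is `y ∈ V(G1)` and an
`M`-balanced path from `x` to `y` all of whose vertices except `y` lie in `X ∖ V(G1)`. -/
theorem statement_6 {V : Type*} [Fintype V] (G : SimpleGraph V) (hG : Factorizable G)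
    (M : Set (Sym2 V)) (hM : IsPerfectMatchingSet G M)
    (C1 : Set V) (hC1 : IsFactorComponent G C1)
    (X : Set V) (hXsep : Separating G X) (hC1X : C1 ⊆ X) :
    CriticalInducing G C1 X ↔
      ∀ x ∈ X \ C1, ∃ y ∈ C1, ∃ p : G.Walk x y,
        IsBalancedPath M p ∧ ∀ w ∈ p.support, w ≠ y → w ∈ X \ C1 := by
  classical
  -- any edge of M stays within X \ C1 if one endpoint is there
  have hMsame : ∀ e ∈ M, ∀ z w : V, z ∈ e → w ∈ e → z ∈ X \ C1 → w ∈ X \ C1 := by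
    intro e he z w hz hw hzA
    by_cases hwz : w = z
    · exact hwz ▸ hzA
    obtain ⟨b, heq, hadj⟩ := edge_repr (hM.1.1 he) hz
    have hwb : w = b := by
      rw [heq, Sym2.mem_iff] at hw
      tauto
    subst hwb
    have hallow : (allowedSubgraph G).Adj z w :=
      show G.Adj z w ∧ Allowed G s(z, w) from ⟨hadj, ⟨M, hM, heq ▸ he⟩⟩
    set c := (allowedSubgraph G).connectedComponentMk z with hc
    have hwc : w ∈ c.supp := by
      rw [SimpleGraph.ConnectedComponent.mem_supp_iff]
      exact SimpleGraph.ConnectedComponent.sound hallow.symm.reachable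
    have hzc : z ∈ c.supp := by rw [SimpleGraph.ConnectedComponent.mem_supp_iff]
    have hfc : IsFactorComponent G c.supp := ⟨c, rfl⟩
    have hwX : w ∈ X := by
      rcases hXsep c.supp hfc with h | h
      · exact h hwc
      · exact absurd hzA.1 (Set.disjoint_left.mp h hzc)
    refine ⟨hwX, ?_⟩
    intro hwC1
    obtain ⟨c1, hc1⟩ := hC1
    have h1 : (allowedSubgraph G).connectedComponentMk w = c1 := by
      rw [← SimpleGraph.ConnectedComponent.mem_supp_iff, ← hc1]
      exact hwC1
    have h2 : (allowedSubgraph G).connectedComponentMk w = c :=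
      (SimpleGraph.ConnectedComponent.mem_supp_iff _ _).mp hwc
    have hzc1 : z ∈ C1 := by
      rw [hc1, SimpleGraph.ConnectedComponent.mem_supp_iff]
      exact hc.symm.trans (h2.symm.trans h1)
    exact hzA.2 hzc1
  set M1 : Set (Sym2 V) := {g ∈ M | ∀ z ∈ g, z ∈ X \ C1} with hM1def
  have hM1G : M1 ⊆ G.edgeSet := fun g hg => hM.1.1 hg.1
  have hM1d : DisjointEdges M1 := disjointEdges_subset (fun g hg => hg.1) hM.1.2
  have hM1A : ∀ g ∈ M1, ∀ z ∈ g, z ∈ X \ C1 := fun g hg => hg.2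
  have hM1cov : ∀ z ∈ X \ C1, ∃ g ∈ M1, z ∈ g := by
    intro z hz
    obtain ⟨e, he, hze⟩ := hM.2 z
    exact ⟨e, ⟨he, fun w hw => hMsame e he z w hze hw hz⟩, hze⟩
  have hM1M : M1 ⊆ M := fun g hg => hg.1
  constructor
  · -- forward direction
    rintro ⟨-, -, hFC⟩ x hx
    obtain ⟨M', ⟨hM'G, hM'd⟩, hM'in, hM'cov⟩ := hFC (some ⟨x, hx⟩)
    have hnonemem : (none : Option ↥(X \ C1)) ∈ ({some ⟨x, hx⟩} : Set (Option ↥(X \ C1)))ᶜ := by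
      simp
    obtain ⟨e', he'M, hnonee'⟩ := hM'cov none hnonemem
    obtain ⟨b, he'eq, hadj'⟩ := edge_repr (hM'G he'M) hnonee'
    cases b with
    | none => exact absurd hadj' (fun h => h)
    | some w =>
    obtain ⟨s0, hs0C1, hadjws0⟩ := hadj'
    have hs0A : s0 ∉ X \ C1 := fun h => h.2 hs0C1
    have hwe' : (some w : Option ↥(X \ C1)) ∈ e' := he'eq ▸ Sym2.mem_mk_right _ _
    have hnoneuniq : ∀ E ∈ M', (none : Option ↥(X \ C1)) ∈ E → E = e' := by
      intro E hE hmem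
      by_contra hne
      exact hM'd E hE e' he'M hne none hmem hnonee'
    have hsomeok : ∀ E ∈ M', ∀ a : ↥(X \ C1), (some a : Option ↥(X \ C1)) ∈ E →
        a ≠ ⟨x, hx⟩ := by
      intro E hE a hmem heq
      have := hM'in E hE (some a) hmem
      rw [heq] at this
      exact this rfl
    set N1 : Set (Sym2 V) := insert s(w.1, s0)
      {g | ∃ a b : ↥(X \ C1), g = s(a.1, b.1) ∧ s(some a, some b) ∈ M'} with hN1def
    have hN1G : N1 ⊆ G.edgeSet := by
      rintro g (rfl | ⟨a, b, rfl, hab⟩)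
      · exact (G.mem_edgeSet).mpr hadjws0
      · exact (G.mem_edgeSet).mpr
          (((contractOn G X C1).mem_edgeSet).mp (hM'G hab) : G.Adj a.1 b.1)
    have hN1d : DisjointEdges N1 := by
      rintro e (rfl | ⟨a1, b1, rfl, h1⟩) f (rfl | ⟨a2, b2, rfl, h2⟩) hne z hz hzf
      · exact hne rfl
      · rw [Sym2.mem_iff] at hz hzf
        rcases hz with rfl | rfl
        · -- z = w.1
          have : w = a2 ∨ w = b2 := by
            rcases hzf with h | h
            · exact Or.inl (Subtype.ext h)
            · exact Or.inr (Subtype.ext h)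
          have hwmem : (some w : Option ↥(X \ C1)) ∈ s(some a2, some b2) := by
            rcases this with rfl | rfl
            · exact Sym2.mem_mk_left _ _
            · exact Sym2.mem_mk_right _ _
          have hne2 : s((some a2 : Option ↥(X \ C1)), some b2) ≠ e' := by
            intro hcon
            have : (none : Option ↥(X \ C1)) ∈ s(some a2, some b2) := by
              rw [hcon, he'eq]; exact Sym2.mem_mk_left _ _
            rw [Sym2.mem_iff] at this
            rcases this with h | h <;> exact nomatch h
          exact hM'd _ h2 e' he'M hne2 (some w) hwmem hwe'
        · -- z = s0
          rcases hzf with h | h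
          · exact hs0A (h ▸ a2.2)
          · exact hs0A (h ▸ b2.2)
      · -- symmetric: e lifted, f special
        rw [Sym2.mem_iff] at hz hzf
        rcases hzf with h | h
        · have hwmem : (some w : Option ↥(X \ C1)) ∈ s(some a1, some b1) := by
            rcases hz with h' | h'
            · have : w = a1 := Subtype.ext (h.symm.trans h')
              rw [this]; exact Sym2.mem_mk_left _ _
            · have : w = b1 := Subtype.ext (h.symm.trans h')
              rw [this]; exact Sym2.mem_mk_right _ _
          have hne2 : s((some a1 : Option ↥(X \ C1)), some b1) ≠ e' := by
            intro hcon
            have : (none : Option ↥(X \ C1)) ∈ s(some a1, some b1) := by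
              rw [hcon, he'eq]; exact Sym2.mem_mk_left _ _
            rw [Sym2.mem_iff] at this
            rcases this with h'' | h'' <;> exact nomatch h''
          exact hM'd _ h1 e' he'M hne2 (some w) hwmem hwe'
        · rcases hz with h' | h'
          · exact hs0A (by rw [h.symm.trans h']; exact a1.2)
          · exact hs0A (by rw [h.symm.trans h']; exact b1.2)
      · -- both lifted
        have hne' : s((some a1 : Option ↥(X \ C1)), some b1) ≠ s(some a2, some b2) := by
          intro hcon
          exact hne (unlift_eq hcon)
        rw [Sym2.mem_iff] at hz hzf
        have hmem1 : ∃ zz : ↥(X \ C1), zz.1 = z ∧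
            (some zz : Option ↥(X \ C1)) ∈ s(some a1, some b1) := by
          rcases hz with rfl | rfl
          · exact ⟨a1, rfl, Sym2.mem_mk_left _ _⟩
          · exact ⟨b1, rfl, Sym2.mem_mk_right _ _⟩
        obtain ⟨zz, hzz, hzzmem⟩ := hmem1
        have hzzmem2 : (some zz : Option ↥(X \ C1)) ∈ s(some a2, some b2) := by
          rcases hzf with h | h
          · have : zz = a2 := Subtype.ext (hzz.trans h)
            rw [this]; exact Sym2.mem_mk_left _ _
          · have : zz = b2 := Subtype.ext (hzz.trans h)
            rw [this]; exact Sym2.mem_mk_right _ _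
        exact hM'd _ h1 _ h2 hne' (some zz) hzzmem hzzmem2
    have hN1A : ∀ g ∈ N1, ∀ z ∈ g, z ∈ (X \ C1) ∪ {s0} := by
      rintro g (rfl | ⟨a, b, rfl, hab⟩) z hz
      · rw [Sym2.mem_iff] at hz
        rcases hz with rfl | rfl
        · exact Or.inl w.2
        · exact Or.inr rfl
      · rw [Sym2.mem_iff] at hz
        rcases hz with rfl | rfl
        · exact Or.inl a.2
        · exact Or.inl b.2
    have hN1x : ∀ g ∈ N1, x ∉ g := by
      rintro g (rfl | ⟨a, b, rfl, hab⟩) hxg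
      · rw [Sym2.mem_iff] at hxg
        rcases hxg with h | h
        · exact hsomeok e' he'M w hwe' (Subtype.ext h.symm)
        · exact hs0A (h ▸ ⟨hx.1, hx.2⟩)
      · rw [Sym2.mem_iff] at hxg
        rcases hxg with h | h
        · exact hsomeok _ hab a (Sym2.mem_mk_left _ _) (Subtype.ext h.symm)
        · exact hsomeok _ hab b (Sym2.mem_mk_right _ _) (Subtype.ext h.symm)
    have hN1cov : ∀ z ∈ ((X \ C1) ∪ {s0}) \ {x}, ∃ g ∈ N1, z ∈ g := by
      rintro z ⟨hz, hzx⟩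
      simp only [Set.mem_singleton_iff] at hzx
      rcases hz with hzA | hzs
      · have hzsome : (some ⟨z, hzA⟩ : Option ↥(X \ C1)) ∈
            ({some ⟨x, hx⟩} : Set (Option ↥(X \ C1)))ᶜ := by
          simp only [Set.mem_compl_iff, Set.mem_singleton_iff]
          intro hcon
          exact hzx (congrArg Subtype.val (Option.some_injective _ hcon))
        obtain ⟨E, hE, hzE⟩ := hM'cov _ hzsome
        obtain ⟨b2, hEeq, hEadj⟩ := edge_repr (hM'G hE) hzE
        cases b2 with
        | none =>
          have : E = e' := hnoneuniq E hE (hEeq ▸ Sym2.mem_mk_right _ _)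
          rw [this, he'eq] at hEeq
          rw [Sym2.eq_iff] at hEeq
          have hzw : z = w.1 := by
            rcases hEeq with ⟨h, h'⟩ | ⟨h, h'⟩
            · exact nomatch h
            · exact (congrArg Subtype.val (Option.some_injective _ h')).symm
          exact ⟨s(w.1, s0), Or.inl rfl, hzw ▸ Sym2.mem_mk_left _ _⟩
        | some b2 =>
          refine ⟨s(z, b2.1), Or.inr ⟨⟨z, hzA⟩, b2, rfl, hEeq ▸ hE⟩, Sym2.mem_mk_left _ _⟩
      · exact ⟨s(w.1, s0), Or.inl rfl, hzs ▸ Sym2.mem_mk_right _ _⟩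
    obtain ⟨p, hppath, hpeven, hppos, hpsup, hphead, hpalt⟩ :=
      lemmaA ((X \ C1).ncard) (Set.toFinite _) rfl hs0A hx
        hM1G hM1d hM1A hM1cov hN1G hN1d hN1A hN1x hN1cov
    refine ⟨s0, hs0C1, p, ⟨hppath, hpeven, ?_, ?_⟩, hpsup⟩
    · intro e he f hf heM hfM hne z hz
      have heN1 : e ∈ N1 := hpalt e he (fun hcon => heM (hM1M hcon))
      have hfN1 : f ∈ N1 := hpalt f hf (fun hcon => hfM (hM1M hcon))
      exact hN1d e heN1 f hfN1 hne z hz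
    · intro e he
      exact hM1M (hphead e he)
  · -- backward direction
    intro hbal
    refine ⟨hXsep, hC1X, ?_⟩
    intro v
    cases v with
    | none =>
      refine ⟨{E | ∃ a b : ↥(X \ C1), E = s(some a, some b) ∧ s(a.1, b.1) ∈ M},
        ⟨?_, ?_⟩, ?_, ?_⟩
      · rintro E ⟨a, b, rfl, hab⟩
        exact ((contractOn G X C1).mem_edgeSet).mpr
          (((G.mem_edgeSet).mp (hM.1.1 hab) : G.Adj a.1 b.1))
      · rintro E ⟨a1, b1, rfl, h1⟩ F ⟨a2, b2, rfl, h2⟩ hne z hz hzf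
        have hne' : s(a1.1, b1.1) ≠ s(a2.1, b2.1) := fun hcon => hne (lift_eq hcon)
        rw [Sym2.mem_iff] at hz hzf
        have hmem1 : ∃ zz : V, (z = some a1 ∨ z = some b1) ∧ zz ∈ s(a1.1, b1.1) ∧
            (∀ c : ↥(X \ C1), z = some c → zz = c.1) := by
          rcases hz with rfl | rfl
          · exact ⟨a1.1, Or.inl rfl, Sym2.mem_mk_left _ _,
              fun c hc => congrArg Subtype.val (Option.some_injective _ hc)⟩
          · exact ⟨b1.1, Or.inr rfl, Sym2.mem_mk_right _ _,
              fun c hc => congrArg Subtype.val (Option.some_injective _ hc)⟩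
        obtain ⟨zz, _, hzz1, hzzval⟩ := hmem1
        have hzz2 : zz ∈ s(a2.1, b2.1) := by
          rcases hzf with h | h
          · rw [hzzval a2 h]; exact Sym2.mem_mk_left _ _
          · rw [hzzval b2 h]; exact Sym2.mem_mk_right _ _
        exact hM.1.2 _ h1 _ h2 hne' zz hzz1 hzz2
      · rintro E ⟨a, b, rfl, hab⟩ z hz
        rw [Sym2.mem_iff] at hz
        rcases hz with rfl | rfl <;> simp
      · intro v' hv'
        cases v' with
        | none => exact absurd rfl hv'
        | some a =>
          obtain ⟨e, he, hae⟩ := hM.2 a.1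
          obtain ⟨c, heq, hadj⟩ := edge_repr (hM.1.1 he) hae
          have hcA : c ∈ X \ C1 :=
            hMsame e he a.1 c hae (heq ▸ Sym2.mem_mk_right _ _) a.2
          exact ⟨s(some a, some ⟨c, hcA⟩), ⟨a, ⟨c, hcA⟩, rfl, heq ▸ he⟩,
            Sym2.mem_mk_left _ _⟩
    | some a0 =>
      obtain ⟨y, hyC1, p, ⟨hppath, hpeven, hpalt, hphead⟩, hpsup⟩ := hbal a0.1 a0.2
      have hyA : y ∉ X \ C1 := fun h => h.2 hyC1
      have hxy : a0.1 ≠ y := fun h => hyA (h ▸ a0.2)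
      have hppos : 0 < p.length := by
        rcases Nat.eq_zero_or_pos p.length with h | h
        · exact absurd (SimpleGraph.Walk.eq_of_length_eq_zero h) hxy
        · exact h
      have hhead' : ∀ e ∈ p.edges.head?, e ∈ M1 := by
        intro e he
        have heM : e ∈ M := hphead e he
        have hep : e ∈ p.edges := List.mem_of_mem_head? he
        have hxe : a0.1 ∈ e := by
          cases p with
          | nil => simp at hppos
          | cons h1 q =>
            simp only [SimpleGraph.Walk.edges_cons, List.head?, Option.mem_def,
              Option.some_inj] at he
            rw [← he]
            exact Sym2.mem_mk_left _ _
        refine ⟨heM, fun z hz => hMsame e heM a0.1 z hxe hz a0.2⟩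
      have hnM : ∀ e ∈ p.edges, e ∉ M1 → e ∉ M := by
        intro e he heM1 heM
        have hzbad : ∃ z ∈ e, z ∉ X \ C1 := by
          by_contra hcon
          push_neg at hcon
          exact heM1 ⟨heM, hcon⟩
        obtain ⟨z, hze, hzA⟩ := hzbad
        have hzy : z = y := by
          by_contra hzy
          exact hzA (hpsup z (mem_support_of_mem_edges'_s6 he hze) hzy)
        subst hzy
        obtain ⟨c, heq, hadj⟩ := edge_repr (p.edges_subset_edgeSet he) hze
        have hcy : c ≠ z := hadj.ne'
        have hcA : c ∈ X \ C1 :=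
          hpsup c (mem_support_of_mem_edges'_s6 he (heq ▸ Sym2.mem_mk_right _ _)) hcy
        exact hzA (hMsame e heM c z (heq ▸ Sym2.mem_mk_right _ _) hze hcA)
      have halt' : ∀ e ∈ p.edges, ∀ f ∈ p.edges, e ∉ M1 → f ∉ M1 → e ≠ f →
          ∀ z, z ∈ e → z ∉ f := by
        intro e he f hf heM hfM hne
        exact hpalt e he f hf (hnM e he heM) (hnM f hf hfM) hne
      obtain ⟨N1, hN1G, hN1d, hN1A, hN1x, hN1cov⟩ :=
        lemmaB p.length p rfl hyA hM1G hM1d hM1A hM1cov hppath hpeven hppos hpsup hhead' halt'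
      -- lift N1 to the contraction
      refine ⟨{E | ∃ a b : ↥(X \ C1), E = s(some a, some b) ∧ s(a.1, b.1) ∈ N1} ∪
        {E | ∃ a : ↥(X \ C1), E = s(some a, none) ∧ s(a.1, y) ∈ N1}, ⟨?_, ?_⟩, ?_, ?_⟩
      · rintro E (⟨a, b, rfl, hab⟩ | ⟨a, rfl, ha⟩)
        · exact ((contractOn G X C1).mem_edgeSet).mpr
            (((G.mem_edgeSet).mp (hN1G hab) : G.Adj a.1 b.1))
        · exact ((contractOn G X C1).mem_edgeSet).mpr
            (⟨y, hyC1, (G.mem_edgeSet).mp (hN1G ha)⟩ :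
              (contractOn G X C1).Adj (some a) none)
      · rintro E (⟨a1, b1, rfl, h1⟩ | ⟨a1, rfl, h1⟩) F (⟨a2, b2, rfl, h2⟩ | ⟨a2, rfl, h2⟩)
          hne z hz hzf
        · -- ss-ss
          have hne' : s(a1.1, b1.1) ≠ s(a2.1, b2.1) := fun hcon => hne (lift_eq hcon)
          rw [Sym2.mem_iff] at hz hzf
          have hmem1 : ∃ zz : V, zz ∈ s(a1.1, b1.1) ∧
              (∀ c : ↥(X \ C1), z = some c → zz = c.1) := by
            rcases hz with rfl | rfl
            · exact ⟨a1.1, Sym2.mem_mk_left _ _,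
                fun c hc => congrArg Subtype.val (Option.some_injective _ hc)⟩
            · exact ⟨b1.1, Sym2.mem_mk_right _ _,
                fun c hc => congrArg Subtype.val (Option.some_injective _ hc)⟩
          obtain ⟨zz, hzz1, hzzval⟩ := hmem1
          have hzz2 : zz ∈ s(a2.1, b2.1) := by
            rcases hzf with h | h
            · rw [hzzval a2 h]; exact Sym2.mem_mk_left _ _
            · rw [hzzval b2 h]; exact Sym2.mem_mk_right _ _
          exact hN1d _ h1 _ h2 hne' zz hzz1 hzz2
        · -- ss-sn
          have hne' : s(a1.1, b1.1) ≠ s(a2.1, y) := by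
            intro hcon
            have hymem : y ∈ s(a1.1, b1.1) := by rw [hcon]; exact Sym2.mem_mk_right _ _
            rw [Sym2.mem_iff] at hymem
            rcases hymem with h | h
            · exact hyA (by rw [h]; exact a1.2)
            · exact hyA (by rw [h]; exact b1.2)
          rw [Sym2.mem_iff] at hz hzf
          rcases hz with rfl | rfl
          · rcases hzf with h | h
            · have hv : a1.1 = a2.1 := congrArg Subtype.val (Option.some_injective _ h)
              refine hN1d _ h1 _ h2 hne' a1.1 (Sym2.mem_mk_left _ _) ?_
              rw [hv]; exact Sym2.mem_mk_left _ _
            · exact nomatch h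
          · rcases hzf with h | h
            · have hv : b1.1 = a2.1 := congrArg Subtype.val (Option.some_injective _ h)
              refine hN1d _ h1 _ h2 hne' b1.1 (Sym2.mem_mk_right _ _) ?_
              rw [hv]; exact Sym2.mem_mk_left _ _
            · exact nomatch h
        · -- sn-ss
          have hne' : s(a1.1, y) ≠ s(a2.1, b2.1) := by
            intro hcon
            have hymem : y ∈ s(a2.1, b2.1) := by rw [← hcon]; exact Sym2.mem_mk_right _ _
            rw [Sym2.mem_iff] at hymem
            rcases hymem with h | h
            · exact hyA (by rw [h]; exact a2.2)
            · exact hyA (by rw [h]; exact b2.2)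
          rw [Sym2.mem_iff] at hz hzf
          rcases hz with rfl | rfl
          · rcases hzf with h | h
            · have hv : a1.1 = a2.1 := congrArg Subtype.val (Option.some_injective _ h)
              refine hN1d _ h1 _ h2 hne' a1.1 (Sym2.mem_mk_left _ _) ?_
              rw [hv]; exact Sym2.mem_mk_left _ _
            · have hv : a1.1 = b2.1 := congrArg Subtype.val (Option.some_injective _ h)
              refine hN1d _ h1 _ h2 hne' a1.1 (Sym2.mem_mk_left _ _) ?_
              rw [hv]; exact Sym2.mem_mk_right _ _
          · rcases hzf with h | h
            · exact nomatch h
            · exact nomatch h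
        · -- sn-sn
          have ha12 : a1 ≠ a2 := by
            intro hcon
            exact hne (by rw [hcon])
          have hne' : s(a1.1, y) ≠ s(a2.1, y) := by
            intro hcon
            rw [Sym2.eq_iff] at hcon
            rcases hcon with ⟨h, _⟩ | ⟨h, _⟩
            · exact ha12 (Subtype.ext h)
            · exact hyA (by rw [← h]; exact a1.2)
          exact absurd (Sym2.mem_mk_right a2.1 y)
            (hN1d _ h1 _ h2 hne' y (Sym2.mem_mk_right _ _))
      · rintro E (⟨a, b, rfl, hab⟩ | ⟨a, rfl, ha⟩) z hz
        · rw [Sym2.mem_iff] at hz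
          simp only [Set.mem_compl_iff, Set.mem_singleton_iff]
          rcases hz with rfl | rfl <;> intro hcon
          · exact hN1x _ hab
              ((congrArg Subtype.val (Option.some_injective _ hcon)) ▸ Sym2.mem_mk_left _ _)
          · exact hN1x _ hab
              ((congrArg Subtype.val (Option.some_injective _ hcon)) ▸ Sym2.mem_mk_right _ _)
        · rw [Sym2.mem_iff] at hz
          simp only [Set.mem_compl_iff, Set.mem_singleton_iff]
          rcases hz with rfl | rfl <;> intro hcon
          · exact hN1x _ ha
              ((congrArg Subtype.val (Option.some_injective _ hcon)) ▸ Sym2.mem_mk_left _ _)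
          · exact nomatch hcon
      · intro v' hv'
        cases v' with
        | none =>
          have hyy : y ∈ ((X \ C1) ∪ {y}) \ {a0.1} := ⟨Or.inr rfl, fun h => hxy h.symm⟩
          obtain ⟨g, hg, hyg⟩ := hN1cov y hyy
          obtain ⟨c, hgeq, hadj⟩ := edge_repr (hN1G hg) hyg
          have hcy : c ≠ y := hadj.ne'
          have hcA : c ∈ X \ C1 := by
            rcases hN1A g hg c (hgeq ▸ Sym2.mem_mk_right _ _) with h | h
            · exact h
            · exact absurd h hcy
          refine ⟨s(some ⟨c, hcA⟩, none), Or.inr ⟨⟨c, hcA⟩, rfl, ?_⟩,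
            Sym2.mem_mk_right _ _⟩
          rw [Sym2.eq_swap]
          exact hgeq ▸ hg
        | some a =>
          have hax : a ≠ a0 := by
            intro hcon
            rw [hcon] at hv'
            exact hv' rfl
          have haA : a.1 ∈ ((X \ C1) ∪ {y}) \ {a0.1} :=
            ⟨Or.inl a.2, fun h => hax (Subtype.ext h)⟩
          obtain ⟨g, hg, hag⟩ := hN1cov a.1 haA
          obtain ⟨c, hgeq, hadj⟩ := edge_repr (hN1G hg) hag
          rcases hN1A g hg c (hgeq ▸ Sym2.mem_mk_right _ _) with hcA | hcy
          · exact ⟨s(some a, some ⟨c, hcA⟩), Or.inl ⟨a, ⟨c, hcA⟩, rfl, hgeq ▸ hg⟩,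
              Sym2.mem_mk_left _ _⟩
          · simp only [Set.mem_singleton_iff] at hcy
            subst hcy
            exact ⟨s(some a, none), Or.inr ⟨a, rfl, hgeq ▸ hg⟩, Sym2.mem_mk_left _ _⟩
end

section
/- Let G be a finite simple graph and M a matching of G. Let H1 and H2 be factor-critical subgraphs of G such that there exists a vertex v ∈ V(H1) ∩ V(H2) and, for each i = 1, 2, the set M ∩ E(Hi) is a near-perfect matching of Hi exposing exactly the vertex v. Then the union H1 ∪ H2 is factor-critical. -/
open SimpleGraph

variable {V : Type*}

/-- A subgraph `H` of `G` is factor-critical: for every `v ∈ V(H)`, `H - v` has a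
perfect matching. -/
def SubgraphFactorCritical (G : SimpleGraph V) (H : G.Subgraph) : Prop :=
  ∀ v ∈ H.verts, ∃ N : Set (Sym2 V), N ⊆ H.edgeSet ∧ DisjointEdges N ∧
    (∀ e ∈ N, v ∉ e) ∧ ∀ u ∈ H.verts, u ≠ v → ∃ e ∈ N, u ∈ e


lemma aux_dj_unique {N : Set (Sym2 V)} (hN : DisjointEdges N) {e f : Sym2 V} {x : V}
    (he : e ∈ N) (hf : f ∈ N) (hxe : x ∈ e) (hxf : x ∈ f) : e = f := by
  by_contra h
  exact hN e he f hf h x hxe hxf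

open Classical in
noncomputable def aux_pfn (N : Set (Sym2 V)) (u : V) : V :=
  if h : ∃ e ∈ N, u ∈ e then Sym2.Mem.other h.choose_spec.2 else u

lemma aux_pfn_spec {N : Set (Sym2 V)} {u : V} (h : ∃ e ∈ N, u ∈ e) :
    s(u, aux_pfn N u) ∈ N := by
  rw [aux_pfn, dif_pos h, Sym2.other_spec]
  exact h.choose_spec.1

lemma aux_pfn_not_cov {N : Set (Sym2 V)} {u : V} (h : ¬ ∃ e ∈ N, u ∈ e) :
    aux_pfn N u = u := by
  rw [aux_pfn, dif_neg h]

lemma aux_pfn_eq {N : Set (Sym2 V)} (hN : DisjointEdges N) {e : Sym2 V} {u : V}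
    (he : e ∈ N) (hu : u ∈ e) : e = s(u, aux_pfn N u) :=
  aux_dj_unique hN he (aux_pfn_spec ⟨e, he, hu⟩) hu (Sym2.mem_mk_left _ _)

lemma aux_pfn_invol {N : Set (Sym2 V)} (hN : DisjointEdges N) (u : V) :
    aux_pfn N (aux_pfn N u) = u := by
  by_cases h : ∃ e ∈ N, u ∈ e
  · have h1 : s(u, aux_pfn N u) ∈ N := aux_pfn_spec h
    have h2 : aux_pfn N u ∈ s(u, aux_pfn N u) := Sym2.mem_mk_right _ _
    have h3 := aux_pfn_eq hN h1 h2
    rw [Sym2.eq_iff] at h3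
    rcases h3 with ⟨h4, h5⟩ | ⟨h4, _⟩
    · exact h5.symm.trans h4.symm
    · exact h4.symm
  · rw [aux_pfn_not_cov h, aux_pfn_not_cov h]

lemma aux_pfn_ne {G : SimpleGraph V} {N : Set (Sym2 V)} (hNG : N ⊆ G.edgeSet) {u : V}
    (h : ∃ e ∈ N, u ∈ e) : aux_pfn N u ≠ u := by
  intro heq
  have h1 : s(u, aux_pfn N u) ∈ N := aux_pfn_spec h
  have := hNG h1
  rw [SimpleGraph.mem_edgeSet, heq] at this
  exact G.irrefl this

lemma aux_parity {α : Type*} [DecidableEq α] (g : α → α) :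
    ∀ (s : Finset α), (∀ x ∈ s, g x ∈ s) → (∀ x ∈ s, g (g x) = x) →
    (s.filter fun x => g x = x).card % 2 = s.card % 2 := by
  intro s
  induction s using Finset.strongInduction with
  | _ s ih =>
    intro hmem hinv
    rcases Finset.eq_empty_or_nonempty s with rfl | ⟨x, hx⟩
    · simp
    by_cases hgx : g x = x
    · have hsub : s.erase x ⊂ s := Finset.erase_ssubset hx
      have hmem' : ∀ y ∈ s.erase x, g y ∈ s.erase x := by
        intro y hy
        rcases Finset.mem_erase.mp hy with ⟨hyx, hys⟩
        refine Finset.mem_erase.mpr ⟨?_, hmem y hys⟩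
        intro h
        apply hyx
        rw [← hinv y hys, h, hgx]
      have hinv' : ∀ y ∈ s.erase x, g (g y) = y := fun y hy =>
        hinv y (Finset.mem_of_mem_erase hy)
      have := ih _ hsub hmem' hinv'
      have hfe : (s.filter fun y => g y = y) = insert x ((s.erase x).filter fun y => g y = y) := by
        ext y
        simp only [Finset.mem_filter, Finset.mem_insert, Finset.mem_erase]
        constructor
        · rintro ⟨hys, hgy⟩
          by_cases hyx : y = x
          · exact Or.inl hyx
          · exact Or.inr ⟨⟨hyx, hys⟩, hgy⟩
        · rintro (rfl | ⟨⟨_, hys⟩, hgy⟩)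
          · exact ⟨hx, hgx⟩
          · exact ⟨hys, hgy⟩
      have hxnot : x ∉ (s.erase x).filter fun y => g y = y := by
        simp [Finset.mem_filter]
      rw [hfe, Finset.card_insert_of_notMem hxnot, ← Finset.card_erase_add_one hx]
      omega
    · set t := (s.erase x).erase (g x) with ht
      have hgxs : g x ∈ s.erase x := Finset.mem_erase.mpr ⟨hgx, hmem x hx⟩
      have hsub : t ⊂ s := by
        have h1 : t ⊆ s.erase x := Finset.erase_subset _ _
        exact lt_of_le_of_lt (Finset.le_iff_subset.mpr h1) (Finset.erase_ssubset hx)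
      have hmem' : ∀ y ∈ t, g y ∈ t := by
        intro y hy
        have hys : y ∈ s := Finset.mem_of_mem_erase (Finset.mem_of_mem_erase hy)
        have hyggx : y ≠ g x := (Finset.mem_erase.mp hy).1
        have hyx : y ≠ x := (Finset.mem_erase.mp (Finset.mem_of_mem_erase hy)).1
        refine Finset.mem_erase.mpr ⟨?_, Finset.mem_erase.mpr ⟨?_, hmem y hys⟩⟩
        · intro h
          apply hyx
          rw [← hinv y hys, h, hinv x hx]
        · intro h
          apply hyggx
          rw [← hinv y hys, h]
      have hinv' : ∀ y ∈ t, g (g y) = y := fun y hy =>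
        hinv y (Finset.mem_of_mem_erase (Finset.mem_of_mem_erase hy))
      have hcard : s.card = t.card + 2 := by
        rw [ht, Finset.card_erase_of_mem hgxs, Finset.card_erase_of_mem hx]
        have h1 : 1 ≤ (s.erase x).card := Finset.card_pos.mpr ⟨g x, hgxs⟩
        have h2 : (s.erase x).card = s.card - 1 := Finset.card_erase_of_mem hx
        omega
      have hfeq : (s.filter fun y => g y = y) = t.filter fun y => g y = y := by
        ext y
        simp only [Finset.mem_filter, ht, Finset.mem_erase]
        constructor
        · rintro ⟨hys, hgy⟩
          have hyx : y ≠ x := by rintro rfl; exact hgx hgy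
          have hygx : y ≠ g x := by
            rintro rfl
            have h5 := hinv x hx
            rw [hgy] at h5
            exact hgx h5
          exact ⟨⟨hygx, hyx, hys⟩, hgy⟩
        · rintro ⟨⟨_, _, hys⟩, hgy⟩
          exact ⟨hys, hgy⟩
      rw [hfeq, ih t hsub hmem' hinv', hcard]
      omega

lemma aux_key {V : Type*} [Fintype V] (G : SimpleGraph V)
    (M : Set (Sym2 V)) (hM : IsMatchingSet G M)
    (H1 H2 : G.Subgraph) (v : V) (hv1 : v ∈ H1.verts)
    (hnp1 : (∀ e ∈ M ∩ H1.edgeSet, v ∉ e) ∧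
      ∀ u ∈ H1.verts, u ≠ v → ∃ e ∈ M ∩ H1.edgeSet, u ∈ e)
    (hnp2 : (∀ e ∈ M ∩ H2.edgeSet, v ∉ e) ∧
      ∀ u ∈ H2.verts, u ≠ v → ∃ e ∈ M ∩ H2.edgeSet, u ∈ e)
    (h1 : SubgraphFactorCritical G H1)
    (w : V) (hw : w ∈ H1.verts) :
    ∃ N : Set (Sym2 V), N ⊆ H1.edgeSet ∪ H2.edgeSet ∧ DisjointEdges N ∧
      (∀ e ∈ N, w ∉ e) ∧ ∀ u ∈ H1.verts ∪ H2.verts, u ≠ w → ∃ e ∈ N, u ∈ e := by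
  classical
  set M1 := M ∩ H1.edgeSet with hM1def
  set M2 := M ∩ H2.edgeSet with hM2def
  have hMdj : DisjointEdges M := hM.2
  have hM1dj : DisjointEdges M1 := fun e he f hf => hMdj e he.1 f hf.1
  have hMM : M1 ∪ M2 ⊆ M := by rintro e (he | he) <;> exact he.1
  by_cases hwv : w = v
  · subst hwv
    refine ⟨M1 ∪ M2, ?_, ?_, ?_, ?_⟩
    · rintro e (he | he)
      · exact Or.inl he.2
      · exact Or.inr he.2
    · exact fun e he f hf => hMdj e (hMM he) f (hMM hf)
    · rintro e (he | he)
      · exact hnp1.1 e he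
      · exact hnp2.1 e he
    · rintro u (hu | hu) hune
      · obtain ⟨e, he, hue⟩ := hnp1.2 u hu hune
        exact ⟨e, Or.inl he, hue⟩
      · obtain ⟨e, he, hue⟩ := hnp2.2 u hu hune
        exact ⟨e, Or.inr he, hue⟩
  · obtain ⟨N1, hN1sub, hN1dj, hN1w, hN1cov⟩ := h1 w hw
    set mp := aux_pfn M1 with hmpdef
    set np := aux_pfn N1 with hnpdef
    have hM1G : M1 ⊆ G.edgeSet := fun e he => H1.edgeSet_subset he.2
    have hN1G : N1 ⊆ G.edgeSet := fun e he => H1.edgeSet_subset (hN1sub he)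
    have hmpmem : ∀ x ∈ H1.verts, mp x ∈ H1.verts := by
      intro x hx
      by_cases h : ∃ e ∈ M1, x ∈ e
      · exact SimpleGraph.Subgraph.mem_verts_of_mem_edge (aux_pfn_spec h).2
          (Sym2.mem_mk_right _ _)
      · rw [hmpdef, aux_pfn_not_cov h]; exact hx
    have hnpmem : ∀ x ∈ H1.verts, np x ∈ H1.verts := by
      intro x hx
      by_cases h : ∃ e ∈ N1, x ∈ e
      · exact SimpleGraph.Subgraph.mem_verts_of_mem_edge (hN1sub (aux_pfn_spec h))
          (Sym2.mem_mk_right _ _)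
      · rw [hnpdef, aux_pfn_not_cov h]; exact hx
    have hmpfix : ∀ x ∈ H1.verts, x ≠ v → mp x ≠ x := fun x hx hxv =>
      aux_pfn_ne hM1G (hnp1.2 x hx hxv)
    have hnpfix : ∀ x ∈ H1.verts, x ≠ w → np x ≠ x := fun x hx hxw =>
      aux_pfn_ne hN1G (hN1cov x hx hxw)
    have hnpw : np w = w := aux_pfn_not_cov (fun ⟨e, he, hwe⟩ => hN1w e he hwe)
    have hmpinv : ∀ x, mp (mp x) = x := aux_pfn_invol hM1dj
    have hnpinv : ∀ x, np (np x) = x := aux_pfn_invol hN1dj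
    set F : V → V := fun x => np (mp x) with hF
    have hFinj : Function.Injective F := by
      intro a b h
      have h2 := congrArg (fun y => mp (np y)) h
      simpa [hF, hmpinv, hnpinv] using h2
    have hit : ∀ k, F^[k] w ∈ H1.verts := by
      intro k
      induction k with
      | zero => simpa using hw
      | succ k ih =>
        rw [Function.iterate_succ_apply']
        exact hnpmem _ (hmpmem _ ih)
    -- periodicity
    obtain ⟨p, hp1, hpw⟩ : ∃ p, 1 ≤ p ∧ F^[p] w = w := by
      obtain ⟨i, j, hne, hEq⟩ := Finite.exists_ne_map_eq_of_infinite (fun k : ℕ => F^[k] w)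
      rcases hne.lt_or_gt with h | h
      · refine ⟨j - i, by omega, hFinj.iterate i ?_⟩
        have hj : i + (j - i) = j := by omega
        rw [← Function.iterate_add_apply, hj]
        exact hEq.symm
      · refine ⟨i - j, by omega, hFinj.iterate j ?_⟩
        have hj : j + (i - j) = i := by omega
        rw [← Function.iterate_add_apply, hj]
        exact hEq
    set R : Set V := {x | ∃ k, F^[k] w = x} with hR
    have hRw : w ∈ R := ⟨0, rfl⟩
    have hRH1 : ∀ x ∈ R, x ∈ H1.verts := by rintro x ⟨k, rfl⟩; exact hit k
    have hRF : ∀ x ∈ R, F x ∈ R := by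
      rintro x ⟨k, rfl⟩
      exact ⟨k + 1, Function.iterate_succ_apply' F k w⟩
    obtain ⟨m, hm⟩ : ∃ m, p = m + 1 := ⟨p - 1, by omega⟩
    have hRpre : ∀ y, F y ∈ R → y ∈ R := by
      rintro y ⟨k, hk⟩
      refine ⟨k + m, hFinj ?_⟩
      show F (F^[k + m] w) = F y
      rw [← Function.iterate_succ_apply' F (k + m) w]
      have h2 : F^[k + m + 1] w = F y := by
        have h3 : k + m + 1 = k + p := by omega
        rw [h3, Function.iterate_add_apply, hpw, hk]
      exact h2
    have hRmp : ∀ k, mp (F^[k] w) ∈ R := by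
      intro k
      induction k with
      | zero =>
        apply hRpre
        have h0 : F (mp (F^[0] w)) = w := by
          simp only [Function.iterate_zero_apply, hF, hmpinv, hnpw]
        rw [h0]; exact hRw
      | succ k ih =>
        apply hRpre
        have he : F (mp (F^[k + 1] w)) = mp (F^[k] w) := by
          rw [Function.iterate_succ_apply']
          simp only [hF, hmpinv, hnpinv]
        rw [he]; exact ih
    have hRmp' : ∀ x ∈ R, mp x ∈ R := by rintro x ⟨k, rfl⟩; exact hRmp k
    have hRnp' : ∀ x ∈ R, np x ∈ R := by
      intro x hx
      have h1 : np x = F (mp x) := by simp only [hF, hmpinv]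
      rw [h1]; exact hRF _ (hRmp' x hx)
    have hvR : ∃ k, F^[k] w = v := by
      by_contra hvR
      have hvR' : v ∉ R := fun h => hvR h
      set Rf : Finset V := Finset.univ.filter (· ∈ R) with hRfdef
      have hmemRf : ∀ x, x ∈ Rf ↔ x ∈ R := by intro x; simp [hRfdef]
      have hmpRf : ∀ x ∈ Rf, mp x ∈ Rf := fun x hx =>
        (hmemRf _).2 (hRmp' x ((hmemRf _).1 hx))
      have hnpRf : ∀ x ∈ Rf, np x ∈ Rf := fun x hx =>
        (hmemRf _).2 (hRnp' x ((hmemRf _).1 hx))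
      have hp1' := aux_parity mp Rf hmpRf (fun x _ => hmpinv x)
      have hp2' := aux_parity np Rf hnpRf (fun x _ => hnpinv x)
      have hempty : (Rf.filter fun x => mp x = x) = ∅ := by
        apply Finset.filter_eq_empty_iff.mpr
        intro x hx heq
        have hxR : x ∈ R := (hmemRf x).1 hx
        by_cases hxv : x = v
        · exact hvR' (hxv ▸ hxR)
        · exact hmpfix x (hRH1 x hxR) hxv heq
      have hsingle : (Rf.filter fun x => np x = x) = {w} := by
        ext x
        simp only [Finset.mem_filter, Finset.mem_singleton, hmemRf]
        constructor
        · rintro ⟨hxR, hfix⟩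
          by_contra hxw
          exact hnpfix x (hRH1 x hxR) hxw hfix
        · rintro rfl
          exact ⟨hRw, hnpw⟩
      rw [hempty] at hp1'
      rw [hsingle] at hp2'
      simp at hp1' hp2'
      omega
    set k0 := Nat.find hvR with hk0def
    have hk0 : F^[k0] w = v := Nat.find_spec hvR
    have hmin : ∀ j < k0, F^[j] w ≠ v := fun j hj => Nat.find_min hvR hj
    have hk0pos : 1 ≤ k0 := by
      rcases Nat.eq_zero_or_pos k0 with h | h
      · exfalso; apply hwv; rw [← hk0, h, Function.iterate_zero_apply]
      · exact h
    have hymw : ∀ j < k0, mp (F^[j] w) ≠ w := by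
      intro j hj heq
      have hqw : F^[j + 1] w = w := by
        rw [Function.iterate_succ_apply']
        show np (mp (F^[j] w)) = w
        rw [heq, hnpw]
      have hmult : ∀ a, F^[(j + 1) * a] w = w := by
        intro a
        induction a with
        | zero => simp
        | succ a ih =>
          have h3 : (j + 1) * (a + 1) = (j + 1) * a + (j + 1) := by ring
          rw [h3, Function.iterate_add_apply, hqw, ih]
      have hmod : F^[k0 % (j + 1)] w = v := by
        have h1 : (j + 1) * (k0 / (j + 1)) + k0 % (j + 1) = k0 := Nat.div_add_mod k0 (j + 1)
        calc F^[k0 % (j + 1)] w = F^[k0 % (j + 1)] (F^[(j + 1) * (k0 / (j + 1))] w) := by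
              rw [hmult]
          _ = F^[k0 % (j + 1) + (j + 1) * (k0 / (j + 1))] w := by
              rw [Function.iterate_add_apply]
          _ = v := by
              have h2 : k0 % (j + 1) + (j + 1) * (k0 / (j + 1)) = k0 := by omega
              rw [h2, hk0]
      have hlt : k0 % (j + 1) < k0 := lt_of_lt_of_le (Nat.mod_lt _ (by omega)) (by omega)
      exact hmin _ hlt hmod
    have hAedge : ∀ j < k0, s(F^[j] w, mp (F^[j] w)) ∈ M1 := fun j hj =>
      aux_pfn_spec (hnp1.2 _ (hit j) (hmin j hj))
    have hBedge : ∀ j < k0, s(mp (F^[j] w), F^[j + 1] w) ∈ N1 := by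
      intro j hj
      have h1 : F^[j + 1] w = np (mp (F^[j] w)) := by
        rw [Function.iterate_succ_apply']
      rw [h1]
      exact aux_pfn_spec (hN1cov _ (hmpmem _ (hit j)) (hymw j hj))
    set A : Set (Sym2 V) := {e | ∃ j, j < k0 ∧ e = s(F^[j] w, mp (F^[j] w))} with hA
    set B : Set (Sym2 V) := {e | ∃ j, j < k0 ∧ e = s(mp (F^[j] w), F^[j + 1] w)} with hB
    have hAM : A ⊆ M1 := by rintro e ⟨j, hj, rfl⟩; exact hAedge j hj
    have hBN : B ⊆ N1 := by rintro e ⟨j, hj, rfl⟩; exact hBedge j hj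
    have hMA : ∀ (x : V) (e : Sym2 V), e ∈ M → x ∈ e →
        (∃ j, j < k0 ∧ (x = F^[j] w ∨ x = mp (F^[j] w))) → e ∈ A := by
      rintro x e he hxe ⟨j, hj, hx⟩
      have hedge := hAedge j hj
      have hxin : x ∈ s(F^[j] w, mp (F^[j] w)) := by
        rcases hx with rfl | rfl
        · exact Sym2.mem_mk_left _ _
        · exact Sym2.mem_mk_right _ _
      exact ⟨j, hj, aux_dj_unique hMdj he hedge.1 hxe hxin⟩
    have main : ∀ e ∈ M1 ∪ M2, e ∉ A → ∀ f ∈ B, ∀ x : V, x ∈ e → x ∈ f → False := by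
      rintro e heM heA f hfB x hxe hxf
      obtain ⟨j, hj, rfl⟩ := hfB
      rw [Sym2.mem_iff] at hxf
      have heMM : e ∈ M := hMM heM
      rcases hxf with rfl | rfl
      · exact heA (hMA _ _ heMM hxe ⟨j, hj, Or.inr rfl⟩)
      · by_cases hxv : F^[j + 1] w = v
        · rcases heM with h | h
          · exact hnp1.1 e h (hxv ▸ hxe)
          · exact hnp2.1 e h (hxv ▸ hxe)
        · have hjlt : j + 1 < k0 := by
            rcases Nat.lt_or_ge (j + 1) k0 with h | h
            · exact h
            · exfalso
              have h3 : j + 1 = k0 := by omega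
              exact hxv (h3 ▸ hk0)
          exact heA (hMA _ _ heMM hxe ⟨j + 1, hjlt, Or.inl rfl⟩)
    refine ⟨((M1 ∪ M2) \ A) ∪ B, ?_, ?_, ?_, ?_⟩
    · rintro e (⟨he, -⟩ | he)
      · rcases he with he | he
        · exact Or.inl he.2
        · exact Or.inr he.2
      · exact Or.inl (hN1sub (hBN he))
    · rintro e he f hf hef x hxe hxf
      rcases he with ⟨heM, heA⟩ | heB
      · rcases hf with ⟨hfM, hfA⟩ | hfB
        · exact hef (aux_dj_unique hMdj (hMM heM) (hMM hfM) hxe hxf)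
        · exact main e heM heA f hfB x hxe hxf
      · rcases hf with ⟨hfM, hfA⟩ | hfB
        · exact main f hfM hfA e heB x hxf hxe
        · exact hef (aux_dj_unique hN1dj (hBN heB) (hBN hfB) hxe hxf)
    · rintro e (⟨heM, heA⟩ | heB) hwe
      · exact heA (hMA w e (hMM heM) hwe
          ⟨0, hk0pos, Or.inl (Function.iterate_zero_apply F w).symm⟩)
      · exact hN1w e (hBN heB) hwe
    · intro u hu hune
      by_cases hcase : ∃ j, j < k0 ∧ (u = mp (F^[j] w) ∨ u = F^[j + 1] w)
      · obtain ⟨j, hj, hc⟩ := hcase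
        refine ⟨s(mp (F^[j] w), F^[j + 1] w), Or.inr ⟨j, hj, rfl⟩, ?_⟩
        rcases hc with rfl | rfl
        · exact Sym2.mem_mk_left _ _
        · exact Sym2.mem_mk_right _ _
      · have hnotF : ∀ j, j ≤ k0 → u ≠ F^[j] w := by
          intro j hjle heq
          rcases Nat.eq_zero_or_pos j with rfl | hpos
          · exact hune (heq.trans (Function.iterate_zero_apply F w))
          · apply hcase
            refine ⟨j - 1, by omega, Or.inr ?_⟩
            have h3 : j - 1 + 1 = j := by omega
            rw [h3]; exact heq
        have hunv : u ≠ v := fun h => hnotF k0 le_rfl (h.trans hk0.symm)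
        have hgen : ∀ e, e ∈ M → u ∈ e → e ∉ A := by
          intro e heMem hue heA
          obtain ⟨j, hj, rfl⟩ := heA
          rw [Sym2.mem_iff] at hue
          rcases hue with h | h
          · exact hnotF j hj.le h
          · exact hcase ⟨j, hj, Or.inl h⟩
        rcases hu with huH | huH
        · obtain ⟨e, he, hue⟩ := hnp1.2 u huH hunv
          exact ⟨e, Or.inl ⟨Or.inl he, hgen e he.1 hue⟩, hue⟩
        · obtain ⟨e, he, hue⟩ := hnp2.2 u huH hunv
          exact ⟨e, Or.inl ⟨Or.inr he, hgen e he.1 hue⟩, hue⟩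

/-- Let `G` be a finite simple graph, `M` a matching of `G`, and
`H1, H2` factor-critical subgraphs of `G` sharing a vertex `v` such that for each `i`,
`M ∩ E(Hi)` is a near-perfect matching of `Hi` exposing exactly `v`. Then `H1 ∪ H2` is
factor-critical. -/
theorem statement_16 {V : Type*} [Fintype V] (G : SimpleGraph V)
    (M : Set (Sym2 V)) (hM : IsMatchingSet G M)
    (H1 H2 : G.Subgraph)
    (h1 : SubgraphFactorCritical G H1) (h2 : SubgraphFactorCritical G H2)
    (v : V) (hv1 : v ∈ H1.verts) (hv2 : v ∈ H2.verts)
    (hnp1 : (∀ e ∈ M ∩ H1.edgeSet, v ∉ e) ∧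
      ∀ u ∈ H1.verts, u ≠ v → ∃ e ∈ M ∩ H1.edgeSet, u ∈ e)
    (hnp2 : (∀ e ∈ M ∩ H2.edgeSet, v ∉ e) ∧
      ∀ u ∈ H2.verts, u ≠ v → ∃ e ∈ M ∩ H2.edgeSet, u ∈ e) :
    SubgraphFactorCritical G (H1 ⊔ H2) := by
  intro w hw
  rw [SimpleGraph.Subgraph.verts_sup] at hw
  rcases hw with hw | hw
  · obtain ⟨N, hsub, hdj, hmiss, hcov⟩ := aux_key G M hM H1 H2 v hv1 hnp1 hnp2 h1 w hw
    refine ⟨N, ?_, hdj, hmiss, ?_⟩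
    · rw [SimpleGraph.Subgraph.edgeSet_sup]; exact hsub
    · intro u hu hune
      exact hcov u (by rwa [SimpleGraph.Subgraph.verts_sup] at hu) hune
  · obtain ⟨N, hsub, hdj, hmiss, hcov⟩ := aux_key G M hM H2 H1 v hv2 hnp2 hnp1 h2 w hw
    refine ⟨N, ?_, hdj, hmiss, ?_⟩
    · rw [SimpleGraph.Subgraph.edgeSet_sup, Set.union_comm]; exact hsub
    · intro u hu hune
      apply hcov u ?_ hune
      rw [SimpleGraph.Subgraph.verts_sup] at hu
      rwa [Set.union_comm] at hu
end

section
/- Let G be a factorizable finite simple graph and H a factor-component of G. Let U be the union of the vertex sets of the members of up*(H). Then G[U]/H — the induced subgraph of G on U with V(H) contracted to a single vertex, deleting loops and parallel edges — is factor-critical. -/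
open SimpleGraph

variable {V : Type*}

section Statement17Aux

private lemma aux_mem_comp (G : SimpleGraph V) (v : V) :
    ∃ C : Set V, IsFactorComponent G C ∧ v ∈ C :=
  ⟨((allowedSubgraph G).connectedComponentMk v).supp, ⟨_, rfl⟩,
    (SimpleGraph.ConnectedComponent.mem_supp_iff _ _).mpr rfl⟩

private lemma aux_comp_unique {G : SimpleGraph V} {C1 C2 : Set V}
    (h1 : IsFactorComponent G C1) (h2 : IsFactorComponent G C2) {v : V}
    (hv1 : v ∈ C1) (hv2 : v ∈ C2) : C1 = C2 := by
  obtain ⟨c1, rfl⟩ := h1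
  obtain ⟨c2, rfl⟩ := h2
  rw [SimpleGraph.ConnectedComponent.mem_supp_iff] at hv1 hv2
  rw [← hv1, ← hv2]

private lemma aux_edge_comp {G : SimpleGraph V} {M : Set (Sym2 V)}
    (hM : IsPerfectMatchingSet G M) {a b : V} (hab : s(a, b) ∈ M)
    {C : Set V} (hC : IsFactorComponent G C) (ha : a ∈ C) : b ∈ C := by
  obtain ⟨c, rfl⟩ := hC
  have hadj : (allowedSubgraph G).Adj a b :=
    show G.Adj a b ∧ Allowed G s(a, b) from ⟨G.mem_edgeSet.mp (hM.1.1 hab), M, hM, hab⟩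
  rw [SimpleGraph.ConnectedComponent.mem_supp_iff] at ha ⊢
  rw [← ha]
  exact SimpleGraph.ConnectedComponent.eq.mpr hadj.symm.reachable

/-- Lift a set of edges on `V` with both endpoints in `W` to a set of edges on `T`
via an injection `g : ↥W → T`. -/
private def liftSet {T : Type*} (M : Set (Sym2 V)) (W : Set V) (g : ↥W → T) :
    Set (Sym2 T) :=
  {e | ∃ (a b : V) (ha : a ∈ W) (hb : b ∈ W), s(a, b) ∈ M ∧ e = s(g ⟨a, ha⟩, g ⟨b, hb⟩)}

private lemma liftSet_disjoint {T : Type*} {M : Set (Sym2 V)} {W : Set V} {g : ↥W → T}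
    (hMd : DisjointEdges M) (hg : Function.Injective g) :
    DisjointEdges (liftSet M W g) := by
  rintro e ⟨a, b, ha, hb, hab, rfl⟩ f ⟨c, d, hc, hd, hcd, rfl⟩ hne z hze hzf
  by_cases h : s(a, b) = s(c, d)
  · apply hne
    rcases Sym2.eq_iff.mp h with ⟨rfl, rfl⟩ | ⟨rfl, rfl⟩
    · rfl
    · exact Sym2.eq_swap
  · have key : ∀ u : V, u ∈ s(a, b) → u ∉ s(c, d) := fun u hu => hMd _ hab _ hcd h u hu
    rcases Sym2.mem_iff.mp hze with rfl | rfl <;>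
      rcases Sym2.mem_iff.mp hzf with h2 | h2
    · have h3 : a = c := congrArg Subtype.val (hg h2); subst h3
      exact key a (Sym2.mem_mk_left a b) (Sym2.mem_mk_left a d)
    · have h3 : a = d := congrArg Subtype.val (hg h2); subst h3
      exact key a (Sym2.mem_mk_left a b) (Sym2.mem_mk_right c a)
    · have h3 : b = c := congrArg Subtype.val (hg h2); subst h3
      exact key b (Sym2.mem_mk_right a b) (Sym2.mem_mk_left b d)
    · have h3 : b = d := congrArg Subtype.val (hg h2); subst h3
      exact key b (Sym2.mem_mk_right a b) (Sym2.mem_mk_right c b)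

end Statement17Aux

/-- Let `G` be factorizable and `H` a factor-component. Let `U` be the
union of the vertex sets of the members of `up*(H)`. Then `G[U]/H` is factor-critical. -/
theorem statement_17 {V : Type*} [Fintype V] (G : SimpleGraph V) (hG : Factorizable G)
    (C0 : Set V) (hC0 : IsFactorComponent G C0)
    (U : Set V) (hU : U = ⋃₀ {C : Set V | IsFactorComponent G C ∧ Yield G C0 C}) :
    FactorCritical (contractOn G U C0) := by
  obtain ⟨M, hM⟩ := hG
  have hcomp : ∀ z ∈ U, ∃ C, IsFactorComponent G C ∧ Yield G C0 C ∧ z ∈ C := by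
    intro z hz
    rw [hU] at hz
    obtain ⟨C, ⟨hC, hY⟩, hzC⟩ := hz
    exact ⟨C, hC, hY, hzC⟩
  have hmemU : ∀ {X : Set V}, CriticalInducing G C0 X → X ⊆ U := by
    intro X hX z hz
    obtain ⟨C, hC, hzC⟩ := aux_mem_comp G z
    have hCX : C ⊆ X := by
      rcases hX.1 C hC with h | h
      · exact h
      · exact absurd hz (Set.disjoint_left.mp h hzC)
    rw [hU]
    exact ⟨C, ⟨hC, X, hX, hCX⟩, hzC⟩
  intro v
  cases v with
  | none =>
    refine ⟨liftSet M (U \ C0) (fun p => (some p : Option ↥(U \ C0))), ⟨?_, ?_⟩, ?_, ?_⟩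
    · rintro e ⟨a, b, ha, hb, hab, rfl⟩
      exact (contractOn G U C0).mem_edgeSet.mpr
        (show (contractOn G U C0).Adj (some ⟨a, ha⟩) (some ⟨b, hb⟩) from
          G.mem_edgeSet.mp (hM.1.1 hab))
    · exact liftSet_disjoint hM.1.2 (fun p q h => Option.some_injective _ h)
    · rintro e ⟨a, b, ha, hb, hab, rfl⟩ z hz
      rcases Sym2.mem_iff.mp hz with rfl | rfl <;> simp
    · intro u hu
      cases u with
      | none => simp at hu
      | some y =>
        obtain ⟨e, heM, hye⟩ := hM.2 y.1
        obtain ⟨w, rfl⟩ := Sym2.mem_iff_exists.mp hye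
        obtain ⟨Cy, hCy, hYy, hyCy⟩ := hcomp y.1 y.2.1
        have hwCy : w ∈ Cy := aux_edge_comp hM heM hCy hyCy
        have hwU : w ∈ U := by rw [hU]; exact ⟨Cy, ⟨hCy, hYy⟩, hwCy⟩
        have hwC0 : w ∉ C0 := fun hw => y.2.2 ((aux_comp_unique hCy hC0 hwCy hw) ▸ hyCy)
        exact ⟨s(some y, some ⟨w, hwU, hwC0⟩),
          ⟨y.1, w, y.2, ⟨hwU, hwC0⟩, heM, rfl⟩, Sym2.mem_mk_left _ _⟩
  | some x =>
    obtain ⟨C, hC, hY, hxC⟩ := hcomp x.1 x.2.1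
    obtain ⟨X, hXci, hCX⟩ := hY
    obtain ⟨hSep, hC0X, hFC⟩ := hXci
    have hXU : X ⊆ U := hmemU ⟨hSep, hC0X, hFC⟩
    have hxX : x.1 ∈ X \ C0 := ⟨hCX hxC, x.2.2⟩
    obtain ⟨M₁, hM₁m, hM₁in, hM₁cov⟩ := hFC (some ⟨x.1, hxX⟩)
    have hincl : X \ C0 ⊆ U \ C0 := fun z hz => ⟨hXU hz.1, hz.2⟩
    set ι : Option ↥(X \ C0) → Option ↥(U \ C0) :=
      Option.map (Set.inclusion hincl) with hιdef
    have hιinj : Function.Injective ι :=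
      Option.map_injective (Set.inclusion_injective hincl)
    have hadjmap : ∀ p q : Option ↥(X \ C0), (contractOn G X C0).Adj p q →
        (contractOn G U C0).Adj (ι p) (ι q) := by
      rintro (_ | p) (_ | q) h
      · exact h.elim
      · exact h
      · exact h
      · exact h
    have hcross : ∀ e' ∈ M₁, ∀ z, z ∈ Sym2.map ι e' →
        ∀ (a : V) (ha : a ∈ U \ C0), a ∉ X → z ≠ some ⟨a, ha⟩ := by
      intro e' _ z hz a ha haX hzeq
      obtain ⟨p, hp, hpz⟩ := Sym2.mem_map.mp hz
      subst hzeq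
      cases p with
      | none => simp [hιdef] at hpz
      | some w =>
        rw [hιdef, Option.map_some] at hpz
        have h3 : w.1 = a := congrArg Subtype.val (Option.some_injective _ hpz)
        exact haX (h3 ▸ w.2.1)
    have hN1x : ∀ e' ∈ M₁, ∀ z, z ∈ Sym2.map ι e' → z ≠ some x := by
      intro e' he' z hz hzeq
      obtain ⟨p, hp, hpz⟩ := Sym2.mem_map.mp hz
      have hpin := hM₁in e' he' p hp
      subst hzeq
      cases p with
      | none => simp [hιdef] at hpz
      | some w =>
        rw [hιdef, Option.map_some] at hpz
        have h3 : w.1 = x.1 := congrArg Subtype.val (Option.some_injective _ hpz)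
        exact hpin (Set.mem_singleton_iff.mpr
          (congrArg some (Subtype.ext h3 : w = ⟨x.1, hxX⟩)))
    refine ⟨Sym2.map ι '' M₁ ∪
      liftSet M {a | a ∈ U \ C0 ∧ a ∉ X}
        (fun p => (some ⟨p.1, p.2.1⟩ : Option ↥(U \ C0))), ⟨?_, ?_⟩, ?_, ?_⟩
    · rintro e (⟨e', he', rfl⟩ | ⟨a, b, ha, hb, hab, rfl⟩)
      · revert he'
        refine Sym2.ind (fun p q he' => ?_) e'
        rw [Sym2.map_pair_eq]
        exact (contractOn G U C0).mem_edgeSet.mpr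
          (hadjmap p q ((contractOn G X C0).mem_edgeSet.mp (hM₁m.1 he')))
      · exact (contractOn G U C0).mem_edgeSet.mpr
          (show (contractOn G U C0).Adj (some ⟨a, ha.1⟩) (some ⟨b, hb.1⟩) from
            G.mem_edgeSet.mp (hM.1.1 hab))
    · have hd2 : DisjointEdges (liftSet M {a | a ∈ U \ C0 ∧ a ∉ X}
          (fun p => (some ⟨p.1, p.2.1⟩ : Option ↥(U \ C0)))) :=
        liftSet_disjoint hM.1.2 (fun p q h => by
          have h1 : (⟨p.1, p.2.1⟩ : ↥(U \ C0)) = ⟨q.1, q.2.1⟩ := Option.some_injective _ h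
          have h2 : p.1 = q.1 := by simpa using h1
          exact Subtype.ext h2)
      rintro e (⟨e1, he1, rfl⟩ | he2) f (⟨f1, hf1, rfl⟩ | hf2) hne z hze hzf
      · have hne1 : e1 ≠ f1 := fun h => hne (by rw [h])
        obtain ⟨p, hp, hpz⟩ := Sym2.mem_map.mp hze
        obtain ⟨q, hq, hqz⟩ := Sym2.mem_map.mp hzf
        have hpq : p = q := hιinj (hpz.trans hqz.symm)
        subst hpq
        exact hM₁m.2 e1 he1 f1 hf1 hne1 p hp hq
      · obtain ⟨a, b, ha, hb, hab, rfl⟩ := hf2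
        rcases Sym2.mem_iff.mp hzf with rfl | rfl
        · exact hcross e1 he1 _ hze a ha.1 ha.2 rfl
        · exact hcross e1 he1 _ hze b hb.1 hb.2 rfl
      · obtain ⟨a, b, ha, hb, hab, rfl⟩ := he2
        rcases Sym2.mem_iff.mp hze with rfl | rfl
        · exact hcross f1 hf1 _ hzf a ha.1 ha.2 rfl
        · exact hcross f1 hf1 _ hzf b hb.1 hb.2 rfl
      · exact hd2 e he2 f hf2 hne z hze hzf
    · rintro e (⟨e1, he1, rfl⟩ | ⟨a, b, ha, hb, hab, rfl⟩) z hz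
      · simp only [Set.mem_compl_iff, Set.mem_singleton_iff]
        exact hN1x e1 he1 z hz
      · rcases Sym2.mem_iff.mp hz with rfl | rfl
        · simp only [Set.mem_compl_iff, Set.mem_singleton_iff]
          intro h
          have h3 : a = x.1 := congrArg Subtype.val (Option.some_injective _ h)
          exact ha.2 (h3 ▸ hxX.1)
        · simp only [Set.mem_compl_iff, Set.mem_singleton_iff]
          intro h
          have h3 : b = x.1 := congrArg Subtype.val (Option.some_injective _ h)
          exact hb.2 (h3 ▸ hxX.1)
    · intro u hu
      cases u with
      | none =>
        obtain ⟨e', he', hne'⟩ := hM₁cov none (by simp)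
        exact ⟨Sym2.map ι e', Or.inl ⟨e', he', rfl⟩, Sym2.mem_map.mpr ⟨none, hne', rfl⟩⟩
      | some y =>
        by_cases hyX : y.1 ∈ X
        · have hy2 : y.1 ∈ X \ C0 := ⟨hyX, y.2.2⟩
          have hyne : (some ⟨y.1, hy2⟩ : Option ↥(X \ C0)) ∈
              ({some ⟨x.1, hxX⟩}ᶜ : Set (Option ↥(X \ C0))) := by
            simp only [Set.mem_compl_iff, Set.mem_singleton_iff, Option.some.injEq]
            intro h
            have h3 : y.1 = x.1 := by simpa using h
            exact hu (Set.mem_singleton_iff.mpr (congrArg some (Subtype.ext h3)))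
          obtain ⟨e', he', hye'⟩ := hM₁cov (some ⟨y.1, hy2⟩) hyne
          exact ⟨Sym2.map ι e', Or.inl ⟨e', he', rfl⟩,
            Sym2.mem_map.mpr ⟨some ⟨y.1, hy2⟩, hye', rfl⟩⟩
        · obtain ⟨e, heM, hye⟩ := hM.2 y.1
          obtain ⟨w, rfl⟩ := Sym2.mem_iff_exists.mp hye
          obtain ⟨Cy, hCy, hYy, hyCy⟩ := hcomp y.1 y.2.1
          have hwCy : w ∈ Cy := aux_edge_comp hM heM hCy hyCy
          have hdisj : Disjoint Cy X := by
            rcases hSep Cy hCy with h | h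
            · exact absurd (h hyCy) hyX
            · exact h
          have hwU : w ∈ U := by rw [hU]; exact ⟨Cy, ⟨hCy, hYy⟩, hwCy⟩
          have hwX : w ∉ X := fun hw => Set.disjoint_left.mp hdisj hwCy hw
          have hwC0 : w ∉ C0 := fun hw => hwX (hC0X hw)
          exact ⟨s(some y, some ⟨w, hwU, hwC0⟩),
            Or.inr ⟨y.1, w, ⟨y.2, hyX⟩, ⟨⟨hwU, hwC0⟩, hwX⟩, heM, rfl⟩,
            Sym2.mem_mk_left _ _⟩
end

section
/- Let G be a factorizable finite simple graph and H a factor-component of G. Let S ⊆ V(H) be a union of equivalence classes of the relation ~ on V(H), and let K1, …, Kl (l ≥ 1) be connected components of the subgraph of G induced by the union of the vertex sets of the members of up(H) such that Γ_G(V(Ki)) ∩ V(H) ⊆ S for each i = 1, …, l. Then G[V(K1) ∪ ⋯ ∪ V(Kl) ∪ S]/S — the induced subgraph of G on V(K1) ∪ ⋯ ∪ V(Kl) ∪ S with S contracted to a single vertex, deleting loops and parallel edges — is factor-critical. -/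
open SimpleGraph

variable {V : Type*}

namespace S18

lemma edge_decomp {G : SimpleGraph V} {e : Sym2 V} (he : e ∈ G.edgeSet) {z : V} (hz : z ∈ e) :
    ∃ w, e = s(z, w) ∧ G.Adj z w := by
  induction e with
  | _ a b =>
    rcases Sym2.mem_iff.1 hz with rfl | rfl
    · exact ⟨b, rfl, he⟩
    · exact ⟨a, Sym2.eq_swap.symm, ((SimpleGraph.mem_edgeSet (G := G)).1 he).symm⟩

lemma even_ncard_of_matchcover {G : SimpleGraph V} (M : Set (Sym2 V))
    (B : Set V) (hB : B.Finite) (hsub : M ⊆ G.edgeSet) (hdisj : DisjointEdges M)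
    (hin : ∀ e ∈ M, ∀ x ∈ e, x ∈ B) (hcov : ∀ z ∈ B, ∃ e ∈ M, z ∈ e) :
    Even B.ncard := by
  generalize hn : B.ncard = n
  induction n using Nat.strong_induction_on generalizing M B with
  | _ n ih =>
    rcases B.eq_empty_or_nonempty with rfl | ⟨z, hz⟩
    · subst hn; simp [Set.ncard_empty]
    · obtain ⟨e, heM, hze⟩ := hcov z hz
      obtain ⟨w, rfl, hadj⟩ := edge_decomp (hsub heM) hze
      have hwB : w ∈ B := hin _ heM w (Sym2.mem_iff.2 (Or.inr rfl))
      have hzw : z ≠ w := hadj.ne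
      have hpair : ({z, w} : Set V) ⊆ B := by
        rintro u (rfl | rfl); exacts [hz, hwB]
      have key : ∀ f ∈ M, f ≠ s(z, w) → z ∉ f ∧ w ∉ f := by
        intro f hf hne
        constructor
        · intro hzf
          exact hdisj f hf _ heM hne z hzf hze
        · intro hwf
          exact hdisj f hf _ heM hne w hwf (Sym2.mem_iff.2 (Or.inr rfl))
      set B' := B \ {z, w} with hB'
      set M' := {f ∈ M | z ∉ f ∧ w ∉ f} with hM'
      have hcov' : ∀ u ∈ B', ∃ f ∈ M', u ∈ f := by
        rintro u ⟨huB, hu⟩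
        simp only [Set.mem_insert_iff, Set.mem_singleton_iff, not_or] at hu
        obtain ⟨f, hfM, huf⟩ := hcov u huB
        have hfne : f ≠ s(z, w) := by
          rintro rfl
          rcases Sym2.mem_iff.1 huf with rfl | rfl
          · exact hu.1 rfl
          · exact hu.2 rfl
        exact ⟨f, ⟨hfM, key f hfM hfne⟩, huf⟩
      have hin' : ∀ f ∈ M', ∀ x ∈ f, x ∈ B' := by
        rintro f ⟨hfM, hzf, hwf⟩ x hxf
        refine ⟨hin f hfM x hxf, ?_⟩
        simp only [Set.mem_insert_iff, Set.mem_singleton_iff, not_or]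
        constructor
        · rintro rfl; exact hzf hxf
        · rintro rfl; exact hwf hxf
      have hdisj' : DisjointEdges M' := by
        intro f hf g hg; exact hdisj f hf.1 g hg.1
      have hsub' : M' ⊆ G.edgeSet := fun f hf => hsub hf.1
      have hcard2 : ({z, w} : Set V).ncard = 2 := Set.ncard_pair hzw
      have hle : 2 ≤ B.ncard := by
        have := Set.ncard_le_ncard hpair hB
        omega
      have hcard : B'.ncard = B.ncard - 2 := by
        rw [hB', Set.ncard_diff hpair ((Set.finite_singleton w).insert z), hcard2]
      have hlt : B'.ncard < n := by omega
      have hev := ih B'.ncard hlt M' B' (hB.subset Set.diff_subset) hsub' hdisj' hin' hcov' rfl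
      obtain ⟨k, hk⟩ := hev
      exact ⟨k + 1, by omega⟩

lemma contract_adj_ss {G : SimpleGraph V} {X S : Set V} {a b : ↥(X \ S)} :
    (contractOn G X S).Adj (some a) (some b) ↔ G.Adj a.1 b.1 := Iff.rfl

lemma contract_adj_ns {G : SimpleGraph V} {X S : Set V} {b : ↥(X \ S)} :
    (contractOn G X S).Adj none (some b) ↔ ∃ s ∈ S, G.Adj b.1 s := Iff.rfl

lemma contract_edge_cases {G : SimpleGraph V} {X S : Set V} {e : Sym2 (Option ↥(X \ S))}
    (he : e ∈ (contractOn G X S).edgeSet) :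
    (∃ y : ↥(X \ S), e = s(none, some y) ∧ ∃ s ∈ S, G.Adj y.1 s) ∨
    (∃ a b : ↥(X \ S), e = s(some a, some b) ∧ G.Adj a.1 b.1) := by
  induction e with
  | _ a b =>
    have hadj : (contractOn G X S).Adj a b := he
    match a, b, hadj with
    | some x, some y, h => exact Or.inr ⟨x, y, rfl, h⟩
    | some x, none, h => exact Or.inl ⟨x, Sym2.eq_swap.symm, h⟩
    | none, some y, h => exact Or.inl ⟨y, rfl, h⟩

/-- lift a matching on `V` to the contracted graph -/
def optLift (X S : Set V) (N : Set (Sym2 V)) : Set (Sym2 (Option ↥(X \ S))) :=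
  {e | ∃ a b : ↥(X \ S), e = s(some a, some b) ∧ s(a.1, b.1) ∈ N}

lemma optLift_sub {G : SimpleGraph V} {X S : Set V} {N : Set (Sym2 V)}
    (hN : N ⊆ G.edgeSet) : optLift X S N ⊆ (contractOn G X S).edgeSet := by
  rintro e ⟨a, b, rfl, hab⟩
  exact contract_adj_ss.2 ((SimpleGraph.mem_edgeSet (G := G)).1 (hN hab))

lemma optLift_none_not_mem {X S : Set V} {N : Set (Sym2 V)} {e : Sym2 (Option ↥(X \ S))}
    (he : e ∈ optLift X S N) : (none : Option ↥(X \ S)) ∉ e := by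
  obtain ⟨a, b, rfl, -⟩ := he
  intro h
  rcases Sym2.mem_iff.1 h with h | h <;> exact nomatch h

lemma optLift_mem_val {X S : Set V} {N : Set (Sym2 V)} {e : Sym2 (Option ↥(X \ S))}
    (he : e ∈ optLift X S N) {u : Option ↥(X \ S)} (hu : u ∈ e) :
    ∃ a : ↥(X \ S), u = some a ∧ ∃ f ∈ N, a.1 ∈ f ∧ ∀ x ∈ f, x ∈ X \ S := by
  obtain ⟨a, b, rfl, hab⟩ := he
  have hmem : ∀ x ∈ s(a.1, b.1), x ∈ X \ S := by
    intro x hx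
    rcases Sym2.mem_iff.1 hx with rfl | rfl
    exacts [a.2, b.2]
  rcases Sym2.mem_iff.1 hu with rfl | rfl
  · exact ⟨a, rfl, s(a.1, b.1), hab, Sym2.mem_iff.2 (Or.inl rfl), hmem⟩
  · exact ⟨b, rfl, s(a.1, b.1), hab, Sym2.mem_iff.2 (Or.inr rfl), hmem⟩

lemma optLift_disj {X S : Set V} {N : Set (Sym2 V)} (hN : DisjointEdges N) :
    DisjointEdges (optLift X S N) := by
  rintro e ⟨a1, b1, rfl, h1⟩ f ⟨a2, b2, rfl, h2⟩ hne u hue huf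
  have hfne : s(a1.1, b1.1) ≠ s(a2.1, b2.1) := by
    intro h
    rcases Sym2.eq_iff.1 h with ⟨ha, hb⟩ | ⟨ha, hb⟩
    · exact hne (by rw [Subtype.ext ha, Subtype.ext hb])
    · refine hne ?_
      rw [Subtype.ext ha, Subtype.ext hb, Sym2.eq_swap]
  have hval : ∃ c : ↥(X \ S), u = some c ∧ c.1 ∈ s(a1.1, b1.1) ∧ c.1 ∈ s(a2.1, b2.1) := by
    rcases Sym2.mem_iff.1 hue with rfl | rfl <;> rcases Sym2.mem_iff.1 huf with h | h
    · exact ⟨a1, rfl, Sym2.mem_iff.2 (Or.inl rfl), Sym2.mem_iff.2 (Or.inl (by rw [Option.some_inj.1 h]))⟩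
    · exact ⟨a1, rfl, Sym2.mem_iff.2 (Or.inl rfl), Sym2.mem_iff.2 (Or.inr (by rw [Option.some_inj.1 h]))⟩
    · exact ⟨b1, rfl, Sym2.mem_iff.2 (Or.inr rfl), Sym2.mem_iff.2 (Or.inl (by rw [Option.some_inj.1 h]))⟩
    · exact ⟨b1, rfl, Sym2.mem_iff.2 (Or.inr rfl), Sym2.mem_iff.2 (Or.inr (by rw [Option.some_inj.1 h]))⟩
  obtain ⟨c, -, hc1, hc2⟩ := hval
  exact hN _ h1 _ h2 hfne c.1 hc1 hc2

lemma optLift_cover {G : SimpleGraph V} {X S : Set V} {N : Set (Sym2 V)}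
    (hNE : N ⊆ G.edgeSet) (hNin : ∀ f ∈ N, ∀ w ∈ f, w ∈ X \ S)
    (z : ↥(X \ S)) (hz : ∃ f ∈ N, z.1 ∈ f) :
    ∃ e ∈ optLift X S N, some z ∈ e := by
  obtain ⟨f, hfN, hzf⟩ := hz
  obtain ⟨w, rfl, hadj⟩ := edge_decomp (hNE hfN) hzf
  have hw : w ∈ X \ S := hNin _ hfN w (Sym2.mem_iff.2 (Or.inr rfl))
  exact ⟨s(some z, some ⟨w, hw⟩), ⟨z, ⟨w, hw⟩, rfl, hfN⟩, Sym2.mem_iff.2 (Or.inl rfl)⟩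

lemma disjointEdges_union {α : Type*} {P Q : Set (Sym2 α)} (hP : DisjointEdges P)
    (hQ : DisjointEdges Q) (h : ∀ e ∈ P, ∀ f ∈ Q, ∀ x : α, x ∈ e → x ∉ f) :
    DisjointEdges (P ∪ Q) := by
  rintro e (heP | heQ) f (hfP | hfQ) hne x hx
  · exact hP e heP f hfP hne x hx
  · exact h e heP f hfQ x hx
  · intro hxf; exact h f hfP e heQ x hxf hx
  · exact hQ e heQ f hfQ hne x hx

end S18

/-- Let `G` be factorizable, `H` a factor-component, `S ⊆ V(H)` a union
of equivalence classes of `∼` on `V(H)`, and `K1, …, Kl` (`l ≥ 1`) connected components of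
the subgraph of `G` induced by the union of the vertex sets of members of `up(H)` with
`Γ_G(V(Ki)) ∩ V(H) ⊆ S` for each `i`. Then `G[V(K1) ∪ ⋯ ∪ V(Kl) ∪ S]/S` is
factor-critical. -/


theorem statement_18 {V : Type*} [Fintype V] (G : SimpleGraph V) (hG : Factorizable G)
    (C0 : Set V) (hC0 : IsFactorComponent G C0)
    (S : Set V) (hS : S ⊆ C0)
    (hSclass : ∀ u ∈ S, ∀ v ∈ C0, SimRel G v u → v ∈ S)
    (U : Set V)
    (hU : U = ⋃₀ {C : Set V | IsFactorComponent G C ∧ Yield G C0 C ∧ C ≠ C0})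
    (l : ℕ) (hl : 1 ≤ l) (K : Fin l → (G.induce U).ConnectedComponent)
    (hK : ∀ i, ∀ w ∈ C0, w ∉ Subtype.val '' (K i).supp →
      (∃ x ∈ Subtype.val '' (K i).supp, G.Adj w x) → w ∈ S) :
    FactorCritical (contractOn G ((⋃ i, Subtype.val '' (K i).supp) ∪ S) S) := by
  classical
  obtain ⟨M0, hM0⟩ := hG
  obtain ⟨c0, hc0⟩ := hC0
  -- partner function of the perfect matching, giving allowed adjacency
  have partner : ∀ z : V, ∃ w, s(z, w) ∈ M0 ∧ (allowedSubgraph G).Adj z w := by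
    intro z
    obtain ⟨e, heM, hze⟩ := hM0.2 z
    obtain ⟨w, rfl, hadj⟩ := S18.edge_decomp (hM0.1.1 heM) hze
    exact ⟨w, heM, show G.Adj z w ∧ Allowed G s(z, w) from ⟨hadj, M0, hM0, heM⟩⟩
  -- restriction of the perfect matching to an allowed-adjacency-closed set
  have hrestr : ∀ B : Set V, (∀ z ∈ B, ∀ w, (allowedSubgraph G).Adj z w → w ∈ B) →
      ∀ z ∈ B, ∃ e ∈ {e ∈ M0 | ∀ x ∈ e, x ∈ B}, z ∈ e := by
    intro B hcl z hz
    obtain ⟨w, hew, hadj⟩ := partner z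
    have hwB := hcl z hz w hadj
    refine ⟨s(z, w), ⟨hew, ?_⟩, Sym2.mem_iff.2 (Or.inl rfl)⟩
    intro x hx
    rcases Sym2.mem_iff.1 hx with rfl | rfl
    exacts [hz, hwB]
  set T : Set V := ⋃ i, Subtype.val '' (K i).supp with hTdef
  -- basic structural facts
  have hTU : T ⊆ U := by
    rintro z hz
    rw [hTdef, Set.mem_iUnion] at hz
    obtain ⟨i, zz, hzz, rfl⟩ := hz
    exact zz.2
  have hUC0 : ∀ z ∈ U, z ∉ C0 := by
    intro z hz hzc
    rw [hU] at hz
    obtain ⟨C, ⟨⟨c, rfl⟩, -, hne⟩, hzC⟩ := hz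
    apply hne
    rw [hc0]
    rw [SimpleGraph.ConnectedComponent.mem_supp_iff] at hzC
    rw [hc0, SimpleGraph.ConnectedComponent.mem_supp_iff] at hzc
    rw [← hzC, ← hzc]
  have hfam : ∀ z ∈ U, ((allowedSubgraph G).connectedComponentMk z).supp ∈
      {C : Set V | IsFactorComponent G C ∧ Yield G C0 C ∧ C ≠ C0} := by
    intro z hz
    rw [hU] at hz
    obtain ⟨C, hCfam, hzC⟩ := hz
    obtain ⟨c, rfl⟩ := hCfam.1
    rw [SimpleGraph.ConnectedComponent.mem_supp_iff] at hzC
    rw [hzC]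
    exact hCfam
  have hsuppU : ∀ z ∈ U, ((allowedSubgraph G).connectedComponentMk z).supp ⊆ U := by
    intro z hz
    rw [hU]
    exact Set.subset_sUnion_of_mem (hfam z hz)
  -- adjacency within U stays inside the same connected component of G.induce U
  have hK5 : ∀ i : Fin l, ∀ z w : V, z ∈ Subtype.val '' (K i).supp → w ∈ U →
      G.Adj z w → w ∈ Subtype.val '' (K i).supp := by
    rintro i z w ⟨zz, hzz, rfl⟩ hwU hadj
    have hadj' : (G.induce U).Adj zz ⟨w, hwU⟩ := hadj
    rw [SimpleGraph.ConnectedComponent.mem_supp_iff] at hzz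
    refine ⟨⟨w, hwU⟩, ?_, rfl⟩
    rw [SimpleGraph.ConnectedComponent.mem_supp_iff, ← hzz]
    exact SimpleGraph.ConnectedComponent.eq.2 hadj'.symm.reachable
  have hmk_adj : ∀ z w : V, (allowedSubgraph G).Adj z w →
      w ∈ ((allowedSubgraph G).connectedComponentMk z).supp := by
    intro z w h
    rw [SimpleGraph.ConnectedComponent.mem_supp_iff]
    exact SimpleGraph.ConnectedComponent.eq.2 h.symm.reachable
  have hallowedK : ∀ i : Fin l, ∀ z w : V, z ∈ Subtype.val '' (K i).supp →
      (allowedSubgraph G).Adj z w → w ∈ Subtype.val '' (K i).supp := by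
    intro i z w hz hadj
    have hzU : z ∈ U := hTU (by rw [hTdef]; exact Set.mem_iUnion.2 ⟨i, hz⟩)
    have hwU : w ∈ U := hsuppU z hzU (hmk_adj z w hadj)
    exact hK5 i z w hz hwU (show G.Adj z w ∧ _ from hadj).1
  have hST : ∀ z ∈ T, z ∉ S := fun z hz hzS => hUC0 z (hTU hz) (hS hzS)
  have hTX : ∀ z ∈ T, z ∈ (T ∪ S) \ S := fun z hz => ⟨Or.inl hz, hST z hz⟩
  have hXT : ∀ z ∈ (T ∪ S) \ S, z ∈ T := by
    rintro z ⟨hz | hz, hzS⟩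
    · exact hz
    · exact absurd hz hzS
  intro v
  match v with
  | none =>
    -- perfect matching of the union of the components K i
    have hTcl : ∀ z ∈ T, ∀ w, (allowedSubgraph G).Adj z w → w ∈ T := by
      intro z hz w hadj
      rw [hTdef, Set.mem_iUnion] at hz ⊢
      obtain ⟨i, hzi⟩ := hz
      exact ⟨i, hallowedK i z w hzi hadj⟩
    set MT := {e ∈ M0 | ∀ x ∈ e, x ∈ T} with hMTdef
    have hMTE : MT ⊆ G.edgeSet := fun e he => hM0.1.1 he.1
    have hMTdisj : DisjointEdges MT := fun e he f hf => hM0.1.2 e he.1 f hf.1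
    have hMTin : ∀ f ∈ MT, ∀ w ∈ f, w ∈ (T ∪ S) \ S := fun f hf w hw => hTX w (hf.2 w hw)
    refine ⟨S18.optLift (T ∪ S) S MT, ⟨S18.optLift_sub hMTE, S18.optLift_disj hMTdisj⟩,
      ?_, ?_⟩
    · intro e he u hu
      rw [Set.mem_compl_singleton_iff]
      intro h
      rw [h] at hu
      exact S18.optLift_none_not_mem he hu
    · intro u hu
      match u with
      | none => rw [Set.mem_compl_singleton_iff] at hu; exact absurd rfl hu
      | some z =>
        exact S18.optLift_cover hMTE hMTin z (hrestr T hTcl z.1 (hXT z.1 z.2))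
  | some xbar =>
    -- the hard case: a vertex of some K i is deleted
    set x := xbar.1 with hxdef
    have hxT : x ∈ T := hXT x xbar.2
    have hxU : x ∈ U := hTU hxT
    obtain ⟨i, hxTi⟩ := Set.mem_iUnion.1 (by rw [hTdef] at hxT; exact hxT)
    obtain ⟨-, ⟨X0, ⟨hsep, hC0X0, hfc⟩, hsuppX0⟩, -⟩ := hfam x hxU
    have hxX0 : x ∈ X0 := hsuppX0 (SimpleGraph.ConnectedComponent.connectedComponentMk_mem)
    have hxC0 : x ∉ C0 := hUC0 x hxU
    -- every vertex of X0 \ C0 is in U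
    have hX0U : ∀ w, w ∈ X0 → w ∉ C0 → w ∈ U := by
      intro w hw hwc
      have hsfc : IsFactorComponent G ((allowedSubgraph G).connectedComponentMk w).supp :=
        ⟨_, rfl⟩
      have hwsupp : w ∈ ((allowedSubgraph G).connectedComponentMk w).supp :=
        SimpleGraph.ConnectedComponent.connectedComponentMk_mem
      rcases hsep _ hsfc with hsub | hdis
      · rw [hU]
        refine Set.mem_sUnion.2 ⟨_, ⟨hsfc, ⟨X0, ⟨hsep, hC0X0, hfc⟩, hsub⟩, ?_⟩, hwsupp⟩
        intro h
        rw [h] at hwsupp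
        exact hwc hwsupp
      · exact absurd hw (Set.disjoint_left.1 hdis hwsupp)
    -- X0 is closed under allowed adjacency
    have hsepX0 : ∀ z w : V, z ∈ X0 → (allowedSubgraph G).Adj z w → w ∈ X0 := by
      intro z w hz hadj
      have hsfc : IsFactorComponent G ((allowedSubgraph G).connectedComponentMk z).supp :=
        ⟨_, rfl⟩
      rcases hsep _ hsfc with hsub | hdis
      · exact hsub (hmk_adj z w hadj)
      · exact absurd hz (Set.disjoint_left.1 hdis
          SimpleGraph.ConnectedComponent.connectedComponentMk_mem)
    set xhat : ↥(X0 \ C0) := ⟨x, hxX0, hxC0⟩ with hxhatdef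
    obtain ⟨M', ⟨hM'E, hM'disj⟩, hM'in, hM'cov⟩ := hfc (some xhat)
    -- extract the unique edge at the contracted vertex
    have hnc : (none : Option ↥(X0 \ C0)) ∈ ({some xhat}ᶜ : Set (Option ↥(X0 \ C0))) := by
      rw [Set.mem_compl_singleton_iff]; exact fun h => nomatch h
    obtain ⟨e0, he0M, he0n⟩ := hM'cov none hnc
    rcases S18.contract_edge_cases (hM'E he0M) with ⟨y, he0, s0, hs0C0, hys0⟩ |
      ⟨a, b, he0, -⟩
    swap
    · rw [he0] at he0n
      rcases Sym2.mem_iff.1 he0n with h | h <;> exact absurd h (fun h => nomatch h)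
    -- the matching M' transported back to V
    set N : Set (Sym2 V) :=
      {f | ∃ a b : ↥(X0 \ C0), f = s(a.1, b.1) ∧ s(some a, some b) ∈ M'} with hNdef
    have hNE : N ⊆ G.edgeSet := by
      rintro f ⟨a, b, rfl, hab⟩
      exact S18.contract_adj_ss.1 ((SimpleGraph.mem_edgeSet (G := contractOn G X0 C0)).1
        (hM'E hab))
    have hM'nox : ∀ e ∈ M', some xhat ∉ e := by
      intro e he h
      have := hM'in e he (some xhat) h
      rw [Set.mem_compl_singleton_iff] at this
      exact this rfl
    have hM'noy : ∀ e ∈ M', e ≠ e0 → some y ∉ e := by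
      intro e he hne h
      refine hM'disj e he e0 he0M hne (some y) h ?_
      rw [he0]
      exact Sym2.mem_iff.2 (Or.inr rfl)
    have hNprop : ∀ f ∈ N, ∀ w ∈ f, w ∈ X0 ∧ w ∉ C0 ∧ w ≠ x ∧ w ≠ y.1 := by
      rintro f ⟨a, b, rfl, hab⟩ w hw
      have key : ∀ c : ↥(X0 \ C0), c.1 = w → some c ∈ s(some a, some b) →
          w ∈ X0 ∧ w ∉ C0 ∧ w ≠ x ∧ w ≠ y.1 := by
        rintro c rfl hc
        refine ⟨c.2.1, c.2.2, ?_, ?_⟩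
        · intro h
          exact hM'nox _ hab (by rw [show c = xhat from Subtype.ext h] at hc; exact hc)
        · intro h
          have hne : s(some a, some b) ≠ e0 := by
            rw [he0]
            intro hh
            rcases Sym2.eq_iff.1 hh with ⟨h1, -⟩ | ⟨-, h2⟩
            · exact nomatch h1
            · exact nomatch h2
          exact hM'noy _ hab hne (by rw [show c = y from Subtype.ext h] at hc; exact hc)
      rcases Sym2.mem_iff.1 hw with rfl | rfl
      · exact key a rfl (Sym2.mem_iff.2 (Or.inl rfl))
      · exact key b rfl (Sym2.mem_iff.2 (Or.inr rfl))
    have hNdisj : DisjointEdges N := by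
      rintro f1 ⟨a1, b1, rfl, h1⟩ f2 ⟨a2, b2, rfl, h2⟩ hne u hu1 hu2
      have hEne : s(some a1, some b1) ≠ s(some a2, some b2) := by
        intro h
        rcases Sym2.eq_iff.1 h with ⟨ha, hb⟩ | ⟨ha, hb⟩
        · exact hne (by rw [Option.some_inj.1 ha, Option.some_inj.1 hb])
        · refine hne ?_
          rw [Option.some_inj.1 ha, Option.some_inj.1 hb, Sym2.eq_swap]
      have key : ∃ c : ↥(X0 \ C0), some c ∈ s(some a1, some b1) ∧
          some c ∈ s(some a2, some b2) := by
        rcases Sym2.mem_iff.1 hu1 with rfl | rfl <;> rcases Sym2.mem_iff.1 hu2 with h | h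
        · exact ⟨a1, Sym2.mem_iff.2 (Or.inl rfl),
            Sym2.mem_iff.2 (Or.inl (by rw [Subtype.ext h]))⟩
        · exact ⟨a1, Sym2.mem_iff.2 (Or.inl rfl),
            Sym2.mem_iff.2 (Or.inr (by rw [Subtype.ext h]))⟩
        · exact ⟨b1, Sym2.mem_iff.2 (Or.inr rfl),
            Sym2.mem_iff.2 (Or.inl (by rw [Subtype.ext h]))⟩
        · exact ⟨b1, Sym2.mem_iff.2 (Or.inr rfl),
            Sym2.mem_iff.2 (Or.inr (by rw [Subtype.ext h]))⟩
      obtain ⟨c, hc1, hc2⟩ := key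
      exact hM'disj _ h1 _ h2 hEne (some c) hc1 hc2
    have hNcov : ∀ z, z ∈ X0 → z ∉ C0 → z ≠ x → z ≠ y.1 → ∃ f ∈ N, z ∈ f := by
      intro z hz1 hz2 hzx hzy
      have hzc : (some (⟨z, hz1, hz2⟩ : ↥(X0 \ C0)) : Option ↥(X0 \ C0)) ∈
          ({some xhat}ᶜ : Set (Option ↥(X0 \ C0))) := by
        rw [Set.mem_compl_singleton_iff]
        intro h
        exact hzx (congrArg Subtype.val (Option.some_inj.1 h))
      obtain ⟨e, heM, hmem⟩ := hM'cov _ hzc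
      rcases S18.contract_edge_cases (hM'E heM) with ⟨y', hey, -⟩ | ⟨a, b, hee, -⟩
      · exfalso
        by_cases hcase : e = e0
        · rw [hcase, he0] at hmem
          rcases Sym2.mem_iff.1 hmem with h | h
          · exact nomatch h
          · exact hzy (congrArg Subtype.val (Option.some_inj.1 h))
        · refine hM'disj e heM e0 he0M hcase none ?_ ?_
          · rw [hey]; exact Sym2.mem_iff.2 (Or.inl rfl)
          · rw [he0]; exact Sym2.mem_iff.2 (Or.inl rfl)
      · rw [hee] at hmem
        refine ⟨s(a.1, b.1), ⟨a, b, rfl, by rw [← hee]; exact heM⟩, ?_⟩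
        rcases Sym2.mem_iff.1 hmem with h | h
        · exact Sym2.mem_iff.2 (Or.inl (by rw [← Option.some_inj.1 h]))
        · exact Sym2.mem_iff.2 (Or.inr (by rw [← Option.some_inj.1 h]))
    -- the part of K i inside X0
    set A : Set V := X0 ∩ (Subtype.val '' (K i).supp) with hAdef
    have hxA : x ∈ A := ⟨hxX0, hxTi⟩
    have hTiT : ∀ z, z ∈ Subtype.val '' (K i).supp → z ∈ T := by
      intro z hz
      rw [hTdef]
      exact Set.mem_iUnion.2 ⟨i, hz⟩
    have hAcl : ∀ z ∈ A, ∀ w, (allowedSubgraph G).Adj z w → w ∈ A := by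
      rintro z ⟨hz1, hz2⟩ w hadj
      exact ⟨hsepX0 z w hz1 hadj, hallowedK i z w hz2 hadj⟩
    set MA := {e ∈ M0 | ∀ x ∈ e, x ∈ A} with hMAdef
    have hMAcov := hrestr A hAcl
    have hEvenA : Even A.ncard := by
      refine S18.even_ncard_of_matchcover (G := G) MA A (Set.toFinite A)
        (fun e he => hM0.1.1 he.1) (fun e he f hf => hM0.1.2 e he.1 f hf.1)
        (fun e he => he.2) hMAcov
    -- the N-edge at any vertex of A \ {x, y} stays in A
    have hNAcov : ∀ z ∈ A, z ≠ x → z ≠ y.1 →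
        ∃ f ∈ {f ∈ N | ∀ w ∈ f, w ∈ A}, z ∈ f := by
      rintro z ⟨hz1, hz2⟩ hzx hzy
      have hzU : z ∈ U := hTU (hTiT z hz2)
      obtain ⟨f, hfN, hzf⟩ := hNcov z hz1 (hUC0 z hzU) hzx hzy
      obtain ⟨b, rfl, hadj⟩ := S18.edge_decomp (hNE hfN) hzf
      have hb := hNprop _ hfN b (Sym2.mem_iff.2 (Or.inr rfl))
      have hbU : b ∈ U := hX0U b hb.1 hb.2.1
      have hbTi : b ∈ Subtype.val '' (K i).supp := hK5 i z b hz2 hbU hadj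
      refine ⟨s(z, b), ⟨hfN, ?_⟩, Sym2.mem_iff.2 (Or.inl rfl)⟩
      intro w hw
      rcases Sym2.mem_iff.1 hw with rfl | rfl
      · exact ⟨hz1, hz2⟩
      · exact ⟨hb.1, hbTi⟩
    -- y lies in A (parity argument)
    have hyA : y.1 ∈ A := by
      by_contra hyA
      have hcov' : ∀ z ∈ A \ {x}, ∃ f ∈ {f ∈ N | ∀ w ∈ f, w ∈ A}, z ∈ f := by
        rintro z ⟨hzA, hzx⟩
        rw [Set.mem_singleton_iff] at hzx
        refine hNAcov z hzA hzx ?_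
        rintro rfl
        exact hyA hzA
      have hin' : ∀ f ∈ {f ∈ N | ∀ w ∈ f, w ∈ A}, ∀ w ∈ f, w ∈ A \ {x} := by
        rintro f ⟨hfN, hfA⟩ w hw
        refine ⟨hfA w hw, ?_⟩
        rw [Set.mem_singleton_iff]
        exact (hNprop f hfN w hw).2.2.1
      have hEven' : Even (A \ {x}).ncard := by
        refine S18.even_ncard_of_matchcover (G := G) _ (A \ {x})
          (Set.toFinite _) (fun f hf => hNE hf.1)
          (fun e he f hf => hNdisj e he.1 f hf.1) hin' hcov'
      have hc1 : (A \ {x}).ncard = A.ncard - 1 :=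
        Set.ncard_diff_singleton_of_mem hxA
      have hc2 : 0 < A.ncard := (Set.ncard_pos (Set.toFinite A)).2 ⟨x, hxA⟩
      obtain ⟨k1, hk1⟩ := hEvenA
      obtain ⟨k2, hk2⟩ := hEven'
      omega
    have hyTi : y.1 ∈ Subtype.val '' (K i).supp := hyA.2
    have hyx : y.1 ≠ x := by
      intro h
      have : y = xhat := Subtype.ext h
      refine hM'nox e0 he0M ?_
      rw [he0, ← this]
      exact Sym2.mem_iff.2 (Or.inr rfl)
    -- the C0-end of the special edge lies in S
    have hs0S : s0 ∈ S := by
      refine hK i s0 hs0C0 ?_ ⟨y.1, hyTi, hys0.symm⟩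
      intro h
      exact hUC0 s0 (hTU (hTiT s0 h)) hs0C0
    -- the rest of the K j's
    set W : Set V := T \ A with hWdef
    have hWcl : ∀ z ∈ W, ∀ w, (allowedSubgraph G).Adj z w → w ∈ W := by
      rintro z ⟨hzT, hzA⟩ w hadj
      obtain ⟨j, hzj⟩ := Set.mem_iUnion.1 (by rw [hTdef] at hzT; exact hzT)
      have hzU : z ∈ U := hTU hzT
      have hwU : w ∈ U := hsuppU z hzU (hmk_adj z w hadj)
      have hwj : w ∈ Subtype.val '' (K j).supp := hK5 j z w hzj hwU (show G.Adj z w ∧ _ from hadj).1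
      refine ⟨by rw [hTdef]; exact Set.mem_iUnion.2 ⟨j, hwj⟩, ?_⟩
      · rintro ⟨hw1, hw2⟩
        refine hzA ⟨?_, hK5 i w z hw2 hzU (show G.Adj z w ∧ _ from hadj).1.symm⟩
        exact hsepX0 w z hw1 hadj.symm
    set MW := {e ∈ M0 | ∀ x ∈ e, x ∈ W} with hMWdef
    have hMWcov := hrestr W hWcl
    -- assemble the final matching
    set NA := {f ∈ N | ∀ w ∈ f, w ∈ A} with hNAdef
    have hNAE : NA ⊆ G.edgeSet := fun f hf => hNE hf.1
    have hNAdisj : DisjointEdges NA := fun e he f hf => hNdisj e he.1 f hf.1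
    have hNAin : ∀ f ∈ NA, ∀ w ∈ f, w ∈ (T ∪ S) \ S :=
      fun f hf w hw => hTX w (hTiT w (hf.2 w hw).2)
    have hMWE : MW ⊆ G.edgeSet := fun e he => hM0.1.1 he.1
    have hMWdisj : DisjointEdges MW := fun e he f hf => hM0.1.2 e he.1 f hf.1
    have hMWin : ∀ f ∈ MW, ∀ w ∈ f, w ∈ (T ∪ S) \ S :=
      fun f hf w hw => hTX w (hf.2 w hw).1
    set yhat : ↥((T ∪ S) \ S) := ⟨y.1, hTX y.1 (hTiT y.1 hyTi)⟩ with hyhatdef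
    set espec : Sym2 (Option ↥((T ∪ S) \ S)) := s(none, some yhat) with hespec
    set Mfin := (S18.optLift (T ∪ S) S NA ∪ S18.optLift (T ∪ S) S MW) ∪ {espec}
      with hMfin
    have hLiftNA_val : ∀ e ∈ S18.optLift (T ∪ S) S NA, ∀ u ∈ e,
        ∃ a : ↥((T ∪ S) \ S), u = some a ∧ a.1 ∈ A ∧ a.1 ≠ x ∧ a.1 ≠ y.1 := by
      intro e he u hu
      obtain ⟨a, rfl, f, hfNA, haf, -⟩ := S18.optLift_mem_val he hu
      exact ⟨a, rfl, hfNA.2 a.1 haf, (hNprop f hfNA.1 a.1 haf).2.2.1,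
        (hNprop f hfNA.1 a.1 haf).2.2.2⟩
    have hLiftMW_val : ∀ e ∈ S18.optLift (T ∪ S) S MW, ∀ u ∈ e,
        ∃ a : ↥((T ∪ S) \ S), u = some a ∧ a.1 ∈ W := by
      intro e he u hu
      obtain ⟨a, rfl, f, hfMW, haf, -⟩ := S18.optLift_mem_val he hu
      exact ⟨a, rfl, hfMW.2 a.1 haf⟩
    refine ⟨Mfin, ⟨?_, ?_⟩, ?_, ?_⟩
    · -- subset of edge set
      rintro e ((he | he) | he)
      · exact S18.optLift_sub hNAE he
      · exact S18.optLift_sub hMWE he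
      · rw [Set.mem_singleton_iff] at he
        rw [he, hespec]
        exact S18.contract_adj_ns.2 ⟨s0, hs0S, hys0⟩
    · -- disjointness
      refine S18.disjointEdges_union ?_ ?_ ?_
      · refine S18.disjointEdges_union (S18.optLift_disj hNAdisj)
          (S18.optLift_disj hMWdisj) ?_
        intro e he f hf u hue huf
        obtain ⟨a, rfl, haA, -, -⟩ := hLiftNA_val e he u hue
        obtain ⟨a', ha', haW⟩ := hLiftMW_val f hf _ huf
        rw [← Option.some_inj.1 ha'] at haW
        exact haW.2 haA
      · rintro e rfl f rfl hne
        exact absurd rfl hne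
      · rintro e (he | he) f hf u hue huf
        · obtain ⟨a, rfl, -, -, hay⟩ := hLiftNA_val e he u hue
          rw [Set.mem_singleton_iff] at hf
          rw [hf, hespec] at huf
          rcases Sym2.mem_iff.1 huf with h | h
          · exact nomatch h
          · exact hay (congrArg Subtype.val (Option.some_inj.1 h))
        · obtain ⟨a, rfl, haW⟩ := hLiftMW_val e he u hue
          rw [Set.mem_singleton_iff] at hf
          rw [hf, hespec] at huf
          rcases Sym2.mem_iff.1 huf with h | h
          · exact nomatch h
          · rw [congrArg Subtype.val (Option.some_inj.1 h)] at haW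
            exact haW.2 hyA
    · -- edges avoid the deleted vertex
      rintro e ((he | he) | he) u hu
      · rw [Set.mem_compl_singleton_iff]
        obtain ⟨a, rfl, -, hax, -⟩ := hLiftNA_val e he u hu
        intro h
        exact hax (congrArg Subtype.val (Option.some_inj.1 h))
      · rw [Set.mem_compl_singleton_iff]
        obtain ⟨a, rfl, haW⟩ := hLiftMW_val e he u hu
        intro h
        rw [congrArg Subtype.val (Option.some_inj.1 h)] at haW
        exact haW.2 hxA
      · rw [Set.mem_compl_singleton_iff]
        rw [Set.mem_singleton_iff] at he
        rw [he, hespec] at hu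
        rcases Sym2.mem_iff.1 hu with h | h
        · rw [h]; exact fun hh => nomatch hh
        · rw [h]
          intro hh
          exact hyx (congrArg Subtype.val (Option.some_inj.1 hh))
    · -- coverage
      intro u hu
      match u with
      | none =>
        exact ⟨espec, Or.inr rfl, by rw [hespec]; exact Sym2.mem_iff.2 (Or.inl rfl)⟩
      | some z =>
        have hzT : z.1 ∈ T := hXT z.1 z.2
        have hzx : z.1 ≠ x := by
          rw [Set.mem_compl_singleton_iff] at hu
          intro h
          exact hu (by rw [show z = xbar from Subtype.ext h])
        by_cases hzA : z.1 ∈ A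
        · by_cases hzy : z.1 = y.1
          · refine ⟨espec, Or.inr rfl, ?_⟩
            rw [hespec, show z = yhat from Subtype.ext hzy]
            exact Sym2.mem_iff.2 (Or.inr rfl)
          · obtain ⟨f, hfNA, hzf⟩ := hNAcov z.1 hzA hzx hzy
            obtain ⟨e, he, hze⟩ := S18.optLift_cover hNAE hNAin z ⟨f, hfNA, hzf⟩
            exact ⟨e, Or.inl (Or.inl he), hze⟩
        · obtain ⟨e, he, hze⟩ := S18.optLift_cover hMWE hMWin z
            (hMWcov z.1 ⟨hzT, hzA⟩)
          exact ⟨e, Or.inl (Or.inr he), hze⟩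
end
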